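/- arXiv:2112.11884 — 5 statements merged into one kernel-verified Lean document; each statement's English description precedes it below -/
import Mathlib

section
/- Let n > 3 be an odd integer, let 0 < q < 1, and for k = 0, 1, …, (n−1)/2 define u_k := q^{k²/n} · f(q^{n−2k}, q^{n+2k}), where f(a,b) := ∑_{m∈ℤ} a^{m(m+1)/2} b^{m(m−1)/2}. Then u_0 > u_1 > u_2 > ⋯ > u_{(n−1)/2} > 0. -/
open Real

/-- Ramanujan's general theta function `f(a,b) = ∑_{m ∈ ℤ} a^(m(m+1)/2) b^(m(m-1)/2)`. -/
noncomputable def ramF (a b : ℝ) : ℝ :=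
  ∑' m : ℤ, a ^ (m * (m + 1) / 2) * b ^ (m * (m - 1) / 2)

namespace UKAux

open Filter Topology

/-- `∏_{j=a}^{b-1} (1 - R^(2j))`. -/
noncomputable def pr (R : ℝ) (a b : ℕ) : ℝ := ∏ j ∈ Finset.Ico a b, (1 - R ^ (2 * j))

variable {R : ℝ}

lemma factor_pos (hR0 : 0 < R) (hR1 : R < 1) {j : ℕ} (hj : 1 ≤ j) :
    0 < 1 - R ^ (2 * j) := by
  have : R ^ (2 * j) < 1 := pow_lt_one₀ hR0.le hR1 (by omega)
  linarith

lemma pr_pos (hR0 : 0 < R) (hR1 : R < 1) {a : ℕ} (ha : 1 ≤ a) (b : ℕ) :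
    0 < pr R a b := by
  refine Finset.prod_pos fun j hj => ?_
  exact factor_pos hR0 hR1 (le_trans ha (Finset.mem_Ico.mp hj).1)

lemma pr_ne_zero (hR0 : 0 < R) (hR1 : R < 1) {a : ℕ} (ha : 1 ≤ a) (b : ℕ) :
    pr R a b ≠ 0 := (pr_pos hR0 hR1 ha b).ne'

lemma pr_le_one (hR0 : 0 < R) (hR1 : R < 1) {a : ℕ} (ha : 1 ≤ a) (b : ℕ) :
    pr R a b ≤ 1 := by
  refine Finset.prod_le_one (fun j hj => (factor_pos hR0 hR1
    (le_trans ha (Finset.mem_Ico.mp hj).1)).le) (fun j hj => ?_)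
  have : 0 < R ^ (2 * j) := pow_pos hR0 _
  linarith

lemma pr_succ_bot {a b : ℕ} (h : a < b) :
    pr R a b = (1 - R ^ (2 * a)) * pr R (a + 1) b := by
  simpa [pr] using Finset.prod_eq_prod_Ico_succ_bot h (fun j => (1 - R ^ (2 * j)))

lemma pr_succ_top {a b : ℕ} (h : a ≤ b) :
    pr R a (b + 1) = pr R a b * (1 - R ^ (2 * b)) := by
  simpa [pr] using Finset.prod_Ico_succ_top h (fun j => (1 - R ^ (2 * j)))

lemma pr_consec {a b c : ℕ} (hab : a ≤ b) (hbc : b ≤ c) :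
    pr R a b * pr R b c = pr R a c := by
  simpa [pr] using Finset.prod_Ico_consecutive (fun j => (1 - R ^ (2 * j))) hab hbc

/-- Gaussian binomial type coefficient `binom(2N, N-m)_{R²}`. -/
noncomputable def gb (R : ℝ) (N m : ℕ) : ℝ :=
  pr R (N + m + 1) (2 * N + 1) / pr R 1 (N - m + 1)

lemma gb_pos (hR0 : 0 < R) (hR1 : R < 1) (N m : ℕ) : 0 < gb R N m :=
  div_pos (pr_pos hR0 hR1 (by omega) _) (pr_pos hR0 hR1 (by omega) _)

lemma gb_self (N : ℕ) : gb R N N = 1 := by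
  have h1 : pr R (N + N + 1) (2 * N + 1) = 1 := by
    rw [pr, Finset.Ico_eq_empty (by omega), Finset.prod_empty]
  have h2 : pr R 1 (N - N + 1) = 1 := by
    rw [pr, Finset.Ico_eq_empty (by omega), Finset.prod_empty]
  rw [gb, h1, h2, div_one]


/-- The single-step Pascal-type relation. -/
lemma gb_step (hR0 : 0 < R) (hR1 : R < 1) {N m : ℕ} (h : m < N) :
    gb R N m * (1 - R ^ (2 * (N - m))) = gb R N (m + 1) * (1 - R ^ (2 * (N + m + 1))) := by
  obtain ⟨d, rfl⟩ : ∃ d, N = m + 1 + d := ⟨N - (m + 1), by omega⟩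
  have i1 : m + 1 + d + m + 1 + 1 = m + 1 + d + (m + 1) + 1 := by omega
  have i2 : m + 1 + d - m = d + 1 := by omega
  have i3 : m + 1 + d - (m + 1) = d := by omega
  have e1 : pr R (m + 1 + d + m + 1) (2 * (m + 1 + d) + 1)
      = (1 - R ^ (2 * (m + 1 + d + m + 1))) * pr R (m + 1 + d + m + 1 + 1) (2 * (m + 1 + d) + 1) :=
    pr_succ_bot (by omega)
  have e2 : pr R 1 (d + 1 + 1) = pr R 1 (d + 1) * (1 - R ^ (2 * (d + 1))) :=
    pr_succ_top (by omega)
  rw [gb, gb, i2, i3, ← i1, e1, e2]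
  have z1 : pr R 1 (d + 1) ≠ 0 := pr_ne_zero hR0 hR1 (by omega) _
  have z2 : (1 - R ^ (2 * (d + 1))) ≠ 0 := (factor_pos hR0 hR1 (by omega)).ne'
  field_simp

/-- The double-step relation going from level `N` to `N+1`. -/
lemma gb_up (hR0 : 0 < R) (hR1 : R < 1) {N m : ℕ} (h : m ≤ N) :
    gb R (N + 1) m * ((1 - R ^ (2 * (N + 1 + m))) * (1 - R ^ (2 * (N + 1 - m))))
      = gb R N m * ((1 - R ^ (2 * (2 * N + 1))) * (1 - R ^ (2 * (2 * N + 2)))) := by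
  obtain ⟨d, rfl⟩ : ∃ d, N = m + d := ⟨N - m, by omega⟩
  have i1 : m + d + 1 + m + 1 = m + d + m + 1 + 1 := by omega
  have i2 : m + d + 1 - m = d + 1 := by omega
  have i3 : m + d - m = d := by omega
  have i4 : 2 * (m + d + 1) + 1 = 2 * (m + d) + 1 + 1 + 1 := by omega
  have e1 : pr R (m + d + m + 1) (2 * (m + d) + 1 + 1 + 1)
      = (1 - R ^ (2 * (m + d + m + 1))) * pr R (m + d + m + 1 + 1) (2 * (m + d) + 1 + 1 + 1) :=
    pr_succ_bot (by omega)
  have e2 : pr R (m + d + m + 1) (2 * (m + d) + 1 + 1 + 1)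
      = pr R (m + d + m + 1) (2 * (m + d) + 1) *
        ((1 - R ^ (2 * (2 * (m + d) + 1))) * (1 - R ^ (2 * (2 * (m + d) + 1 + 1)))) := by
    rw [pr_succ_top (by omega), pr_succ_top (by omega)]
    ring
  have e3 : pr R 1 (d + 1 + 1) = pr R 1 (d + 1) * (1 - R ^ (2 * (d + 1))) :=
    pr_succ_top (by omega)
  have i5 : 2 * (m + d) + 2 = 2 * (m + d) + 1 + 1 := by omega
  rw [gb, gb, i1, i2, i3, i4, i5, e3]
  have z1 : pr R 1 (d + 1) ≠ 0 := pr_ne_zero hR0 hR1 (by omega) _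
  have z2 : (1 - R ^ (2 * (d + 1))) ≠ 0 := (factor_pos hR0 hR1 (by omega)).ne'
  have key : (1 - R ^ (2 * (m + d + m + 1))) * pr R (m + d + m + 1 + 1) (2 * (m + d) + 1 + 1 + 1)
      = pr R (m + d + m + 1) (2 * (m + d) + 1) *
        ((1 - R ^ (2 * (2 * (m + d) + 1))) * (1 - R ^ (2 * (2 * (m + d) + 1 + 1)))) := by
    rw [← e1, e2]
  field_simp
  linear_combination key

/-- Theta expansion coefficient (`B R N m = R^(m²)·binom(2N,N-m)_{R²}` for `m ≤ N`). -/
noncomputable def B (R : ℝ) (N m : ℕ) : ℝ := if m ≤ N then R ^ (m ^ 2) * gb R N m else 0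

lemma B_rec_succ (hR0 : 0 < R) (hR1 : R < 1) (N m : ℕ) :
    B R (N + 1) (m + 1) = (1 + R ^ (4 * N + 2)) * B R N (m + 1)
      + R ^ (2 * N + 1) * (B R N m + B R N (m + 2)) := by
  rcases Nat.lt_or_ge (m + 2) (N + 1) with hc | hc
  · -- main case : m + 2 ≤ N
    have hm2 : m + 2 ≤ N := by omega
    rw [B, B, B, B, if_pos (by omega), if_pos (by omega), if_pos (by omega), if_pos (by omega)]
    have hup := gb_up hR0 hR1 (show m + 1 ≤ N by omega)
    have h2 := gb_step hR0 hR1 (show m < N by omega)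
    have h3 := gb_step hR0 hR1 (show m + 1 < N by omega)
    -- normalize indices
    obtain ⟨d, rfl⟩ : ∃ d, N = m + 2 + d := ⟨N - (m + 2), by omega⟩
    have i1 : m + 2 + d - m = d + 2 := by omega
    have i2 : m + 2 + d - (m + 1) = d + 1 := by omega
    have i3 : m + 2 + d + 1 - (m + 1) = d + 2 := by omega
    rw [i1] at h2
    rw [i2] at h3
    rw [i3] at hup
    have hD : ((1 - R ^ (2 * (m + 2 + d + 1 + (m + 1)))) * (1 - R ^ (2 * (d + 2)))) ≠ 0 :=
      (mul_pos (factor_pos hR0 hR1 (by omega)) (factor_pos hR0 hR1 (by omega))).ne'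
    refine mul_right_cancel₀ hD ?_
    linear_combination (R ^ ((m + 1) ^ 2)) * hup
      - (R ^ (2 * (m + 2 + d) + 1) * R ^ (m ^ 2) * (1 - R ^ (2 * (m + 2 + d + 1 + (m + 1))))) * h2
      + (R ^ (2 * (m + 2 + d) + 1) * R ^ ((m + 2) ^ 2) * (1 - R ^ (2 * (d + 2)))) * h3
  rcases Nat.eq_or_lt_of_le hc with hc1 | hc1
  · -- m + 1 = N
    obtain rfl : N = m + 1 := by omega
    rw [B, B, B, B, if_pos (by omega), if_pos (by omega), if_pos (by omega), if_neg (by omega),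
      gb_self]
    have hup := gb_up hR0 hR1 (show m + 1 ≤ m + 1 by omega)
    have h2 := gb_step hR0 hR1 (show m < m + 1 by omega)
    have i1 : m + 1 - m = 1 := by omega
    have i2 : m + 1 + 1 - (m + 1) = 1 := by omega
    rw [i1, gb_self] at h2
    rw [i2, gb_self] at hup
    have hD : ((1 - R ^ (2 * (m + 1 + 1 + (m + 1)))) * (1 - R ^ (2 * 1))) ≠ 0 :=
      (mul_pos (factor_pos hR0 hR1 (by omega)) (factor_pos hR0 hR1 (by omega))).ne'
    refine mul_right_cancel₀ hD ?_
    linear_combination (R ^ ((m + 1) ^ 2)) * hup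
      - (R ^ (2 * (m + 1) + 1) * R ^ (m ^ 2) * (1 - R ^ (2 * (m + 1 + 1 + (m + 1))))) * h2
  rcases Nat.eq_or_lt_of_le hc1 with hc2 | hc2
  · -- m + 1 = N + 1
    obtain rfl : N = m := by omega
    rw [B, B, B, B, if_pos (by omega), if_neg (by omega), if_pos (by omega), if_neg (by omega)]
    rw [gb_self, gb_self]
    ring
  · -- m + 1 ≥ N + 2 : everything vanishes
    rw [B, B, B, B, if_neg (by omega), if_neg (by omega), if_neg (by omega), if_neg (by omega)]
    ring

lemma B_rec_zero (hR0 : 0 < R) (hR1 : R < 1) (N : ℕ) :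
    B R (N + 1) 0 = (1 + R ^ (4 * N + 2)) * B R N 0
      + R ^ (2 * N + 1) * (B R N 1 + B R N 1) := by
  rcases Nat.eq_zero_or_pos N with rfl | hN
  · rw [B, B, B, if_pos (by omega), if_pos (by omega), if_neg (by omega)]
    have h1 : gb R 1 0 = pr R 2 3 / pr R 1 2 := rfl
    have h2 : gb R 0 0 = pr R 1 1 / pr R 1 1 := rfl
    have e1 : pr R 2 3 = 1 - R ^ 4 := by
      rw [pr]
      rw [Nat.Ico_succ_singleton]
      norm_num
    have e2 : pr R 1 2 = 1 - R ^ 2 := by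
      rw [pr]
      rw [Nat.Ico_succ_singleton]
      norm_num
    have e3 : pr R 1 1 = 1 := by rw [pr, Finset.Ico_self, Finset.prod_empty]
    rw [h1, h2, e1, e2, e3]
    have hz : (1 : ℝ) - R ^ 2 ≠ 0 := by
      have := factor_pos hR0 hR1 (le_refl 1)
      simpa using this.ne'
    field_simp
    ring
  · rw [B, B, B, if_pos (by omega), if_pos (by omega), if_pos (by omega)]
    have hup := gb_up hR0 hR1 (show 0 ≤ N by omega)
    have h2 := gb_step hR0 hR1 (show 0 < N from hN)
    have i1 : N + 1 - 0 = N + 1 := by omega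
    have i2 : N - 0 = N := by omega
    have i3 : N + 1 + 0 = N + 1 := by omega
    have i4 : N + 0 + 1 = N + 1 := by omega
    rw [i1, i3] at hup
    rw [i2, i4] at h2
    have hD : ((1 - R ^ (2 * (N + 1))) * (1 - R ^ (2 * (N + 1)))) ≠ 0 :=
      (mul_pos (factor_pos hR0 hR1 (by omega)) (factor_pos hR0 hR1 (by omega))).ne'
    refine mul_right_cancel₀ hD ?_
    linear_combination (R ^ (0 ^ 2 : ℕ)) * hup
      + (2 * R ^ (2 * N + 1) * R ^ (1 ^ 2 : ℕ) * (1 - R ^ (2 * (N + 1)))) * h2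

/-- `ℤ`-indexed coefficient. -/
noncomputable def Ac (R : ℝ) (N : ℕ) (m : ℤ) : ℝ := B R N m.natAbs

lemma Ac_rec (hR0 : 0 < R) (hR1 : R < 1) (N : ℕ) (m : ℤ) :
    Ac R (N + 1) m = (1 + R ^ (4 * N + 2)) * Ac R N m
      + R ^ (2 * N + 1) * (Ac R N (m - 1) + Ac R N (m + 1)) := by
  obtain ⟨m', rfl | rfl⟩ := Int.eq_nat_or_neg m
  · rcases m' with _ | m''
    · have h1 : (((0 : ℕ) : ℤ) - 1).natAbs = 1 := by omega
      have h2 : (((0 : ℕ) : ℤ) + 1).natAbs = 1 := by omega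
      have h3 : (((0 : ℕ) : ℤ)).natAbs = 0 := by omega
      rw [Ac, Ac, Ac, Ac, h1, h2, h3]
      exact B_rec_zero hR0 hR1 N
    · have h1 : (((m'' + 1 : ℕ) : ℤ) - 1).natAbs = m'' := by omega
      have h2 : (((m'' + 1 : ℕ) : ℤ) + 1).natAbs = m'' + 2 := by omega
      have h3 : (((m'' + 1 : ℕ) : ℤ)).natAbs = m'' + 1 := by omega
      rw [Ac, Ac, Ac, Ac, h1, h2, h3]
      exact B_rec_succ hR0 hR1 N m''
  · rcases m' with _ | m''
    · have h1 : ((-((0 : ℕ) : ℤ)) - 1).natAbs = 1 := by omega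
      have h2 : ((-((0 : ℕ) : ℤ)) + 1).natAbs = 1 := by omega
      have h3 : ((-((0 : ℕ) : ℤ))).natAbs = 0 := by omega
      rw [Ac, Ac, Ac, Ac, h1, h2, h3]
      exact B_rec_zero hR0 hR1 N
    · have h1 : ((-((m'' + 1 : ℕ) : ℤ)) - 1).natAbs = m'' + 2 := by omega
      have h2 : ((-((m'' + 1 : ℕ) : ℤ)) + 1).natAbs = m'' := by omega
      have h3 : ((-((m'' + 1 : ℕ) : ℤ))).natAbs = m'' + 1 := by omega
      rw [Ac, Ac, Ac, Ac, h1, h2, h3]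
      rw [B_rec_succ hR0 hR1 N m'']
      ring

lemma Ac_zero_of {N : ℕ} {m : ℤ} (h : N < m.natAbs) : Ac R N m = 0 := by
  rw [Ac, B, if_neg (by omega)]

lemma summable_Ac_mul (N : ℕ) (g : ℤ → ℝ) : Summable (fun m : ℤ => Ac R N m * g m) :=
  summable_of_ne_finset_zero (s := Finset.Icc (-(N : ℤ)) N) (fun m hm => by
    rw [Finset.mem_Icc] at hm
    rw [Ac_zero_of (by omega), zero_mul])

/-- Finite theta-like sum. -/
noncomputable def Tfin (R θ : ℝ) (N : ℕ) : ℝ := ∑' m : ℤ, Ac R N m * Real.cos (m * θ)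

lemma Tfin_succ (hR0 : 0 < R) (hR1 : R < 1) (θ : ℝ) (N : ℕ) :
    Tfin R θ (N + 1) = Tfin R θ N * (1 + 2 * R ^ (2 * N + 1) * Real.cos θ + R ^ (4 * N + 2)) := by
  have hs0 : Summable (fun m : ℤ => Ac R N m * Real.cos (m * θ)) := summable_Ac_mul N _
  have hs1 : Summable (fun m : ℤ => Ac R N (m - 1) * Real.cos (m * θ)) :=
    summable_of_ne_finset_zero (s := Finset.Icc (-(N : ℤ) - 1) ((N : ℤ) + 1)) (fun m hm => by
      rw [Finset.mem_Icc] at hm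
      rw [Ac_zero_of (show N < (m - 1).natAbs by omega), zero_mul])
  have hs2 : Summable (fun m : ℤ => Ac R N (m + 1) * Real.cos (m * θ)) :=
    summable_of_ne_finset_zero (s := Finset.Icc (-(N : ℤ) - 1) ((N : ℤ) + 1)) (fun m hm => by
      rw [Finset.mem_Icc] at hm
      rw [Ac_zero_of (show N < (m + 1).natAbs by omega), zero_mul])
  have hshift1 : ∑' m : ℤ, Ac R N (m - 1) * Real.cos (m * θ)
      = ∑' m : ℤ, Ac R N m * Real.cos ((m + 1) * θ) := by
    refine ((Equiv.addRight (1 : ℤ)).tsum_eq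
      (fun m : ℤ => Ac R N (m - 1) * Real.cos (m * θ))).symm.trans ?_
    apply tsum_congr
    intro m
    simp [Equiv.coe_addRight, add_sub_cancel_right]
  have hshift2 : ∑' m : ℤ, Ac R N (m + 1) * Real.cos (m * θ)
      = ∑' m : ℤ, Ac R N m * Real.cos ((m - 1) * θ) := by
    refine ((Equiv.subRight (1 : ℤ)).tsum_eq
      (fun m : ℤ => Ac R N (m + 1) * Real.cos (m * θ))).symm.trans ?_
    apply tsum_congr
    intro m
    simp [Equiv.subRight_apply, sub_add_cancel]
  calc Tfin R θ (N + 1)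
      = ∑' m : ℤ, ((1 + R ^ (4 * N + 2)) * (Ac R N m * Real.cos (m * θ))
          + R ^ (2 * N + 1) * (Ac R N (m - 1) * Real.cos (m * θ)
            + Ac R N (m + 1) * Real.cos (m * θ))) := by
        refine tsum_congr fun m => ?_
        rw [Ac_rec hR0 hR1 N m]
        ring
    _ = (1 + R ^ (4 * N + 2)) * Tfin R θ N
          + R ^ (2 * N + 1) * ((∑' m : ℤ, Ac R N (m - 1) * Real.cos (m * θ))
            + ∑' m : ℤ, Ac R N (m + 1) * Real.cos (m * θ)) := by
        rw [Summable.tsum_add (hs0.mul_left _) ((hs1.add hs2).mul_left _), tsum_mul_left, tsum_mul_left,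
          Summable.tsum_add hs1 hs2]
        rfl
    _ = (1 + R ^ (4 * N + 2)) * Tfin R θ N
          + R ^ (2 * N + 1) * (2 * Real.cos θ * Tfin R θ N) := by
        rw [hshift1, hshift2, ← Summable.tsum_add (summable_Ac_mul N _) (summable_Ac_mul N _)]
        congr 1
        have hpt : ∀ m : ℤ, Ac R N m * Real.cos ((m + 1) * θ) + Ac R N m * Real.cos ((m - 1) * θ)
            = 2 * Real.cos θ * (Ac R N m * Real.cos (m * θ)) := by
          intro m
          have h1 : ((m : ℝ) + 1) * θ = m * θ + θ := by ring
          have h2 : ((m : ℝ) - 1) * θ = m * θ - θ := by ring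
          rw [h1, h2, Real.cos_add, Real.cos_sub]
          ring
        rw [tsum_congr hpt, tsum_mul_left, Tfin]
    _ = Tfin R θ N * (1 + 2 * R ^ (2 * N + 1) * Real.cos θ + R ^ (4 * N + 2)) := by ring

lemma Tfin_zero (θ : ℝ) : Tfin R θ 0 = gb R 0 0 := by
  rw [Tfin]
  rw [tsum_eq_single (0 : ℤ) (fun m hm => by
    rw [Ac_zero_of (show 0 < m.natAbs by omega), zero_mul])]
  simp [Ac, B]

lemma gb_zero_zero : gb R 0 0 = 1 := by
  have : pr R 1 1 = 1 := by rw [pr, Finset.Ico_self, Finset.prod_empty]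
  simp [gb, this]

lemma Tfin_eq_prod (hR0 : 0 < R) (hR1 : R < 1) (θ : ℝ) (N : ℕ) :
    Tfin R θ N = ∏ j ∈ Finset.range N, (1 + 2 * R ^ (2 * j + 1) * Real.cos θ + R ^ (4 * j + 2)) := by
  induction N with
  | zero => simp [Tfin_zero, gb_zero_zero]
  | succ n ih => rw [Finset.prod_range_succ, Tfin_succ hR0 hR1, ih]

lemma factor_pos' (hR0 : 0 < R) (hR1 : R < 1) (θ : ℝ) (j : ℕ) :
    0 < 1 + 2 * R ^ (2 * j + 1) * Real.cos θ + R ^ (4 * j + 2) := by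
  have h1 : R ^ (4 * j + 2) = (R ^ (2 * j + 1)) ^ 2 := by
    rw [← pow_mul]; congr 1; ring
  have h2 : 0 < R ^ (2 * j + 1) := pow_pos hR0 _
  have h3 : R ^ (2 * j + 1) < 1 := pow_lt_one₀ hR0.le hR1 (by omega)
  have h4 := Real.neg_one_le_cos θ
  nlinarith [sq_nonneg (1 - R ^ (2 * j + 1))]
lemma factor_mono (hR0 : 0 < R) (hR1 : R < 1) {θ₁ θ₂ : ℝ} (h0 : 0 ≤ θ₁) (h12 : θ₁ ≤ θ₂)
    (h2 : θ₂ ≤ π) (j : ℕ) :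
    1 + 2 * R ^ (2 * j + 1) * Real.cos θ₂ + R ^ (4 * j + 2)
      ≤ 1 + 2 * R ^ (2 * j + 1) * Real.cos θ₁ + R ^ (4 * j + 2) := by
  have hc : Real.cos θ₂ ≤ Real.cos θ₁ := Real.cos_le_cos_of_nonneg_of_le_pi h0 h2 h12
  have h2' : 0 < R ^ (2 * j + 1) := pow_pos hR0 _
  nlinarith

lemma Tfin_pos (hR0 : 0 < R) (hR1 : R < 1) (θ : ℝ) (N : ℕ) : 0 < Tfin R θ N := by
  rw [Tfin_eq_prod hR0 hR1]
  exact Finset.prod_pos fun j _ => factor_pos' hR0 hR1 θ j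

/-- The crucial finite monotonicity inequality. -/
lemma Tfin_key (hR0 : 0 < R) (hR1 : R < 1) {θ₁ θ₂ : ℝ} (h0 : 0 ≤ θ₁) (h12 : θ₁ ≤ θ₂)
    (h2 : θ₂ ≤ π) (N : ℕ) :
    Tfin R θ₂ (N + 1) * (1 + 2 * R * Real.cos θ₁ + R ^ 2)
      ≤ Tfin R θ₁ (N + 1) * (1 + 2 * R * Real.cos θ₂ + R ^ 2) := by
  have hsplit : ∀ θ, Tfin R θ (N + 1)
      = (∏ j ∈ Finset.range N, (1 + 2 * R ^ (2 * (j+1) + 1) * Real.cos θ + R ^ (4 * (j+1) + 2)))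
        * (1 + 2 * R * Real.cos θ + R ^ 2) := by
    intro θ
    rw [Tfin_eq_prod hR0 hR1, Finset.prod_range_succ']
    norm_num
  rw [hsplit, hsplit]
  have hQ : (∏ j ∈ Finset.range N, (1 + 2 * R ^ (2 * (j+1) + 1) * Real.cos θ₂ + R ^ (4 * (j+1) + 2)))
      ≤ ∏ j ∈ Finset.range N, (1 + 2 * R ^ (2 * (j+1) + 1) * Real.cos θ₁ + R ^ (4 * (j+1) + 2)) :=
    Finset.prod_le_prod (fun j _ => (factor_pos' hR0 hR1 θ₂ _).le)
      (fun j _ => factor_mono hR0 hR1 h0 h12 h2 _)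
  have p1 : 0 < 1 + 2 * R * Real.cos θ₁ + R ^ 2 := by
    have := factor_pos' hR0 hR1 θ₁ 0
    norm_num at this
    nlinarith
  have p2 : 0 < 1 + 2 * R * Real.cos θ₂ + R ^ 2 := by
    have := factor_pos' hR0 hR1 θ₂ 0
    norm_num at this
    nlinarith
  calc (∏ j ∈ Finset.range N, (1 + 2 * R ^ (2 * (j+1) + 1) * Real.cos θ₂ + R ^ (4 * (j+1) + 2)))
      * (1 + 2 * R * Real.cos θ₂ + R ^ 2) * (1 + 2 * R * Real.cos θ₁ + R ^ 2)
      ≤ (∏ j ∈ Finset.range N, (1 + 2 * R ^ (2 * (j+1) + 1) * Real.cos θ₁ + R ^ (4 * (j+1) + 2)))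
      * (1 + 2 * R * Real.cos θ₂ + R ^ 2) * (1 + 2 * R * Real.cos θ₁ + R ^ 2) := by
        have := mul_le_mul_of_nonneg_right (mul_le_mul_of_nonneg_right hQ p2.le) p1.le
        linarith
    _ = (∏ j ∈ Finset.range N, (1 + 2 * R ^ (2 * (j+1) + 1) * Real.cos θ₁ + R ^ (4 * (j+1) + 2)))
      * (1 + 2 * R * Real.cos θ₁ + R ^ 2) * (1 + 2 * R * Real.cos θ₂ + R ^ 2) := by ring

/-- Infinite theta sum. -/
noncomputable def Theta (R θ : ℝ) : ℝ := ∑' m : ℤ, R ^ (m.natAbs ^ 2) * Real.cos (m * θ)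

lemma one_sub_sq_pos (hR0 : 0 < R) (hR1 : R < 1) : 0 < 1 - R ^ 2 := by nlinarith

lemma gb_ratio_bound (hR0 : 0 < R) (hR1 : R < 1) (N : ℕ) :
    ∀ m, m ≤ N → gb R N m * (1 - R ^ 2) ^ m ≤ gb R N 0 := by
  intro m
  induction m with
  | zero => intro _; simp
  | succ m ih =>
    intro hm
    have hmN : m < N := by omega
    have hstep := gb_step hR0 hR1 hmN
    have h1 : gb R N (m + 1) * (1 - R ^ 2) ≤ gb R N m := by
      have hp1 : R ^ (2 * (N + m + 1)) ≤ R ^ 2 :=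
        pow_le_pow_of_le_one hR0.le hR1.le (by omega)
      have hp2 : 0 < gb R N (m + 1) := gb_pos hR0 hR1 N (m + 1)
      have hp3 : R ^ (2 * (N - m)) ≤ 1 := pow_le_one₀ hR0.le hR1.le
      have hp4 : 0 < gb R N m := gb_pos hR0 hR1 N m
      nlinarith [mul_nonneg hp2.le (sub_nonneg.mpr hp1),
        mul_nonneg hp4.le (pow_nonneg hR0.le (2 * (N - m)))]
    have h2 : (0:ℝ) ≤ (1 - R ^ 2) ^ m := pow_nonneg (one_sub_sq_pos hR0 hR1).le m
    calc gb R N (m + 1) * (1 - R ^ 2) ^ (m + 1)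
        = (gb R N (m + 1) * (1 - R ^ 2)) * (1 - R ^ 2) ^ m := by ring
      _ ≤ gb R N m * (1 - R ^ 2) ^ m := mul_le_mul_of_nonneg_right h1 h2
      _ ≤ gb R N 0 := ih (by omega)

lemma B_div_bound (hR0 : 0 < R) (hR1 : R < 1) (N m : ℕ) :
    B R N m / gb R N 0 ≤ R ^ (m ^ 2) * ((1 - R ^ 2)⁻¹) ^ m := by
  have hgb0 : 0 < gb R N 0 := gb_pos hR0 hR1 N 0
  have hcpos : 0 < 1 - R ^ 2 := one_sub_sq_pos hR0 hR1
  have hpow : (0:ℝ) < (1 - R ^ 2) ^ m := pow_pos hcpos m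
  rw [B]
  split_ifs with h
  · rw [div_le_iff₀ hgb0]
    have key := gb_ratio_bound hR0 hR1 N m h
    have e : R ^ (m ^ 2) * ((1 - R ^ 2)⁻¹) ^ m * gb R N 0 * (1 - R ^ 2) ^ m
        = R ^ (m ^ 2) * gb R N 0 := by
      rw [inv_pow]
      field_simp
    have h2 : R ^ (m ^ 2) * gb R N m * (1 - R ^ 2) ^ m ≤ R ^ (m ^ 2) * gb R N 0 := by
      calc R ^ (m ^ 2) * gb R N m * (1 - R ^ 2) ^ m
          = R ^ (m ^ 2) * (gb R N m * (1 - R ^ 2) ^ m) := by ring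
        _ ≤ R ^ (m ^ 2) * gb R N 0 := by
            exact mul_le_mul_of_nonneg_left key (pow_pos hR0 _).le
    rw [← e] at h2
    exact le_of_mul_le_mul_right h2 hpow
  · rw [zero_div]
    positivity

lemma summable_bnd (hR0 : 0 < R) (hR1 : R < 1) :
    Summable (fun m : ℤ => R ^ (m.natAbs ^ 2) * ((1 - R ^ 2)⁻¹) ^ m.natAbs) := by
  set C := (1 - R ^ 2)⁻¹ with hC
  have hCpos : 0 < C := inv_pos.mpr (one_sub_sq_pos hR0 hR1)
  have hnat : Summable (fun j : ℕ => R ^ (j ^ 2) * C ^ j) := by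
    apply summable_of_ratio_norm_eventually_le (r := 1/2) (by norm_num)
    have htend : Tendsto (fun j : ℕ => R ^ j * C) atTop (𝓝 (0 * C)) :=
      (tendsto_pow_atTop_nhds_zero_of_lt_one hR0.le hR1).mul_const C
    rw [zero_mul] at htend
    filter_upwards [htend.eventually_lt_const (show (0:ℝ) < 1/2 by norm_num)] with j hj
    have e1 : ‖R ^ ((j+1) ^ 2) * C ^ (j+1)‖ = R ^ (j ^ 2) * C ^ j * (R ^ (2*j+1) * C) := by
      rw [Real.norm_eq_abs, abs_of_pos (by positivity),
        show (j+1)^2 = j^2 + (2*j+1) by ring, pow_add, pow_succ]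
      ring
    have e2 : ‖R ^ (j ^ 2) * C ^ j‖ = R ^ (j ^ 2) * C ^ j := by
      rw [Real.norm_eq_abs, abs_of_pos (by positivity)]
    rw [e1, e2]
    have h3 : R ^ (2*j+1) * C ≤ R ^ j * C :=
      mul_le_mul_of_nonneg_right
        (pow_le_pow_of_le_one hR0.le hR1.le (by omega)) hCpos.le
    have h4 : R ^ (2*j+1) * C ≤ 1/2 := le_of_lt (lt_of_le_of_lt h3 hj)
    calc R ^ (j ^ 2) * C ^ j * (R ^ (2*j+1) * C) ≤ R ^ (j ^ 2) * C ^ j * (1/2) :=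
          mul_le_mul_of_nonneg_left h4 (by positivity)
      _ = 1/2 * (R ^ (j ^ 2) * C ^ j) := by ring
  apply Summable.of_nat_of_neg
  · refine hnat.congr fun j => ?_
    simp
  · refine hnat.congr fun j => ?_
    simp

lemma gb_ratio_tendsto (hR0 : 0 < R) (hR1 : R < 1) (m : ℕ) :
    Tendsto (fun N : ℕ => gb R N m / gb R N 0) atTop (𝓝 1) := by
  induction m with
  | zero =>
    have : (fun N : ℕ => gb R N 0 / gb R N 0) = fun _ => (1:ℝ) := by
      funext N
      exact div_self (gb_pos hR0 hR1 N 0).ne'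
    rw [this]
    exact tendsto_const_nhds
  | succ m ih =>
    have hq : Tendsto (fun N : ℕ => (1 - R ^ (2 * (N - m))) / (1 - R ^ (2 * (N + m + 1))))
        atTop (𝓝 1) := by
      have hb : Tendsto (fun N : ℕ => R ^ (2 * (N - m))) atTop (𝓝 0) := by
        have h1 : Tendsto (fun j : ℕ => (R ^ 2) ^ j) atTop (𝓝 0) :=
          tendsto_pow_atTop_nhds_zero_of_lt_one (by positivity)
            (by nlinarith)
        have h2 := h1.comp (tendsto_sub_atTop_nat m)
        refine h2.congr fun N => ?_
        simp only [Function.comp_apply, ← pow_mul]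
        try (congr 1 <;> omega)
      have hb2 : Tendsto (fun N : ℕ => R ^ (2 * (N + m + 1))) atTop (𝓝 0) := by
        have h1 : Tendsto (fun j : ℕ => (R ^ 2) ^ j) atTop (𝓝 0) :=
          tendsto_pow_atTop_nhds_zero_of_lt_one (by positivity) (by nlinarith)
        have h2 := h1.comp (tendsto_add_atTop_nat (m + 1))
        refine h2.congr fun N => ?_
        simp only [Function.comp_apply, ← pow_mul]
        try (congr 1 <;> omega)
      have hnum : Tendsto (fun N : ℕ => 1 - R ^ (2 * (N - m))) atTop (𝓝 1) := by
        have := (tendsto_const_nhds (x := (1:ℝ)) (f := atTop (α := ℕ))).sub hb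
        simpa using this
      have hden : Tendsto (fun N : ℕ => 1 - R ^ (2 * (N + m + 1))) atTop (𝓝 1) := by
        have := (tendsto_const_nhds (x := (1:ℝ)) (f := atTop (α := ℕ))).sub hb2
        simpa using this
      have := hnum.div hden one_ne_zero
      rw [div_one] at this
      exact this
    have hmul := ih.mul hq
    rw [mul_one] at hmul
    refine hmul.congr' ?_
    filter_upwards [eventually_ge_atTop (m + 1)] with N hN
    have hstep := gb_step hR0 hR1 (show m < N by omega)
    have hd : (1 - R ^ (2 * (N + m + 1))) ≠ 0 := (factor_pos hR0 hR1 (by omega)).ne'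
    have hg0 : gb R N 0 ≠ 0 := (gb_pos hR0 hR1 N 0).ne'
    rw [div_mul_div_comm, div_eq_div_iff (mul_ne_zero hg0 hd) hg0]
    linear_combination (gb R N 0) * hstep

/-- Tannery / dominated convergence step. -/
lemma Tfin_div_tendsto (hR0 : 0 < R) (hR1 : R < 1) (θ : ℝ) :
    Tendsto (fun N : ℕ => Tfin R θ N / gb R N 0) atTop (𝓝 (Theta R θ)) := by
  have hre : ∀ N : ℕ, Tfin R θ N / gb R N 0
      = ∑' m : ℤ, Ac R N m * Real.cos (m * θ) / gb R N 0 := by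
    intro N
    rw [Tfin, tsum_div_const]
  simp_rw [hre]
  refine tendsto_tsum_of_dominated_convergence (summable_bnd hR0 hR1) (fun m => ?_) ?_
  · -- pointwise convergence
    have h1 : Tendsto (fun N : ℕ => R ^ (m.natAbs ^ 2) * (gb R N m.natAbs / gb R N 0)
        * Real.cos (m * θ)) atTop (𝓝 (R ^ (m.natAbs ^ 2) * 1 * Real.cos (m * θ))) :=
      (((gb_ratio_tendsto hR0 hR1 m.natAbs).const_mul _).mul_const _)
    rw [mul_one] at h1
    refine h1.congr' ?_
    filter_upwards [eventually_ge_atTop m.natAbs] with N hN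
    rw [Ac, B, if_pos hN]
    field_simp
  · -- uniform bound
    filter_upwards [] with N
    intro m
    have hb := B_div_bound hR0 hR1 N m.natAbs
    have hgb0 : 0 < gb R N 0 := gb_pos hR0 hR1 N 0
    have hBnn : 0 ≤ B R N m.natAbs := by
      rw [B]
      split_ifs
      · exact mul_nonneg (pow_nonneg hR0.le _) (gb_pos hR0 hR1 _ _).le
      · exact le_rfl
    rw [Real.norm_eq_abs, Ac, abs_div, abs_mul, abs_of_nonneg hBnn, abs_of_pos hgb0]
    calc B R N m.natAbs * |Real.cos (m * θ)| / gb R N 0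
        ≤ B R N m.natAbs * 1 / gb R N 0 := by
          gcongr
          exact abs_cos_le_one _
      _ = B R N m.natAbs / gb R N 0 := by ring
      _ ≤ _ := hb

/-- The main theta monotonicity result. -/
lemma Theta_mono (hR0 : 0 < R) (hR1 : R < 1) {θ₁ θ₂ : ℝ} (h0 : 0 ≤ θ₁) (h12 : θ₁ ≤ θ₂)
    (h2 : θ₂ ≤ π) :
    Theta R θ₂ * (1 + 2 * R * Real.cos θ₁ + R ^ 2)
      ≤ Theta R θ₁ * (1 + 2 * R * Real.cos θ₂ + R ^ 2) := by
  have lim1 : Tendsto (fun N : ℕ => (Tfin R θ₂ (N + 1) / gb R (N + 1) 0)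
      * (1 + 2 * R * Real.cos θ₁ + R ^ 2)) atTop
      (𝓝 (Theta R θ₂ * (1 + 2 * R * Real.cos θ₁ + R ^ 2))) :=
    (((Tfin_div_tendsto hR0 hR1 θ₂).comp (tendsto_add_atTop_nat 1)).mul_const _)
  have lim2 : Tendsto (fun N : ℕ => (Tfin R θ₁ (N + 1) / gb R (N + 1) 0)
      * (1 + 2 * R * Real.cos θ₂ + R ^ 2)) atTop
      (𝓝 (Theta R θ₁ * (1 + 2 * R * Real.cos θ₂ + R ^ 2))) :=
    (((Tfin_div_tendsto hR0 hR1 θ₁).comp (tendsto_add_atTop_nat 1)).mul_const _)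
  refine le_of_tendsto_of_tendsto' lim1 lim2 fun N => ?_
  have hkey := Tfin_key hR0 hR1 h0 h12 h2 N
  have hgb0 : 0 < gb R (N + 1) 0 := gb_pos hR0 hR1 (N + 1) 0
  calc Tfin R θ₂ (N + 1) / gb R (N + 1) 0 * (1 + 2 * R * Real.cos θ₁ + R ^ 2)
      = (Tfin R θ₂ (N + 1) * (1 + 2 * R * Real.cos θ₁ + R ^ 2)) / gb R (N + 1) 0 := by ring
    _ ≤ (Tfin R θ₁ (N + 1) * (1 + 2 * R * Real.cos θ₂ + R ^ 2)) / gb R (N + 1) 0 := by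
        gcongr
    _ = Tfin R θ₁ (N + 1) / gb R (N + 1) 0 * (1 + 2 * R * Real.cos θ₂ + R ^ 2) := by ring

section PoissonSection
open Complex

lemma natAbs_le_sq (m : ℤ) : ((m.natAbs : ℝ)) ≤ ((m : ℝ)) ^ 2 := by
  have h1 : (m.natAbs : ℝ) ≤ ((m.natAbs : ℝ)) ^ 2 := by
    have := Nat.le_self_pow (two_ne_zero) m.natAbs
    exact_mod_cast this
  have h2 : ((m.natAbs : ℝ)) ^ 2 = ((m : ℝ)) ^ 2 := by
    rw [Nat.cast_natAbs]
    exact_mod_cast _root_.sq_abs m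
  linarith

lemma summable_geom_int (r : ℝ) (hr0 : 0 ≤ r) (hr1 : r < 1) (K : ℝ) :
    Summable (fun m : ℤ => K * r ^ m.natAbs) := by
  apply Summable.mul_left
  apply Summable.of_nat_of_neg
  · refine (summable_geometric_of_lt_one hr0 hr1).congr fun j => ?_
    simp
  · refine (summable_geometric_of_lt_one hr0 hr1).congr fun j => ?_
    simp

/-- Summability of shifted Gaussian sums over `ℤ`. -/
lemma summable_gauss (c x : ℝ) (hc : 0 < c) :
    Summable (fun m : ℤ => Real.exp (-c * ((m : ℝ) + x) ^ 2)) := by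
  have key : ∀ m : ℤ, Real.exp (-c * ((m : ℝ) + x) ^ 2)
      ≤ Real.exp (c * x ^ 2) * (Real.exp (-c / 2)) ^ m.natAbs := by
    intro m
    rw [← Real.exp_nat_mul, ← Real.exp_add]
    apply Real.exp_le_exp.mpr
    have h1 : ((m : ℝ)) ^ 2 / 2 - x ^ 2 ≤ ((m : ℝ) + x) ^ 2 := by
      nlinarith [sq_nonneg ((m : ℝ) + 2 * x)]
    have h2 := natAbs_le_sq m
    nlinarith
  apply Summable.of_nonneg_of_le (fun m => (Real.exp_pos _).le) key
  exact summable_geom_int _ (Real.exp_pos _).le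
    (Real.exp_lt_one_iff.mpr (by linarith)) _

lemma summable_gauss_cos (c : ℝ) (hc : 0 < c) (g : ℤ → ℝ) (hg : ∀ l, |g l| ≤ 1) :
    Summable (fun l : ℤ => Real.exp (-c * (l : ℝ) ^ 2) * g l) := by
  have h0 := summable_gauss c 0 hc
  simp only [add_zero] at h0
  apply Summable.of_norm
  refine Summable.of_nonneg_of_le (fun l => norm_nonneg _) (fun l => ?_) h0
  rw [Real.norm_eq_abs, abs_mul, abs_of_pos (Real.exp_pos _)]
  calc Real.exp (-c * (l:ℝ)^2) * |g l| ≤ Real.exp (-c * (l:ℝ)^2) * 1 :=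
        mul_le_mul_of_nonneg_left (hg l) (Real.exp_pos _).le
    _ = Real.exp (-c * (l:ℝ)^2) := mul_one _

lemma summable_cgauss (c x : ℝ) (hc : 0 < c) :
    Summable (fun n : ℤ => cexp (-(c : ℂ) * (n : ℂ) ^ 2 - (x : ℂ) * (n : ℂ) * I)) := by
  apply Summable.of_norm
  have h0 := summable_gauss c 0 hc
  simp only [add_zero] at h0
  refine h0.congr fun n => ?_
  have ew : (-(c : ℂ) * (n : ℂ) ^ 2 - (x : ℂ) * (n : ℂ) * I)
      = ((-c * (n:ℝ)^2 : ℝ) : ℂ) + ((-(x * n) : ℝ) : ℂ) * I := by push_cast; ring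
  rw [ew, Complex.exp_add, ← Complex.ofReal_exp,
    norm_mul, Complex.norm_real, Complex.norm_exp_ofReal_mul_I,
    mul_one, Real.norm_of_nonneg (Real.exp_pos _).le]

/-- Poisson summation for the Gaussian, real form. -/
lemma poisson {A : ℝ} (hA : 0 < A) (x : ℝ) :
    ∑' m : ℤ, Real.exp (-(π * A) * ((m : ℝ) + x) ^ 2)
      = Real.sqrt A⁻¹ * ∑' l : ℤ, Real.exp (-(π / A) * (l : ℝ) ^ 2) * Real.cos (2 * π * l * x) := by
  have hA' : (0 : ℝ) < A⁻¹ := inv_pos.mpr hA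
  have key := Complex.tsum_exp_neg_quadratic
    (a := (A⁻¹ : ℂ)) (by simpa using hA') (-I * (x : ℂ))
  -- rewrite both sides of `key`
  have hAne : (A : ℂ) ≠ 0 := Complex.ofReal_ne_zero.mpr hA.ne'
  have e1 : ∀ n : ℤ, -(π : ℂ) * (A⁻¹ : ℂ) * (n : ℂ) ^ 2 + 2 * π * (-I * x) * n
      = -((π/A : ℝ) : ℂ) * (n : ℂ) ^ 2 - ((2 * π * x : ℝ) : ℂ) * (n : ℂ) * I := by
    intro n
    push_cast
    field_simp
    ring
  have e2 : ∀ n : ℤ, -(π : ℂ) / (A⁻¹ : ℂ) * ((n : ℂ) + I * (-I * x)) ^ 2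
      = ((-(π * A) * ((n : ℝ) + x) ^ 2 : ℝ) : ℂ) := by
    intro n
    have : I * (-I * (x:ℂ)) = (x:ℂ) := by
      rw [← mul_assoc, mul_comm I (-I), neg_mul, I_mul_I, neg_neg, one_mul]
    rw [this]
    push_cast
    field_simp
  simp_rw [e1, e2] at key
  -- right side of key is the complexification of the real Gaussian sum
  have e3 : ∑' n : ℤ, cexp (((-(π * A) * ((n : ℝ) + x) ^ 2 : ℝ) : ℂ))
      = ((∑' n : ℤ, Real.exp (-(π * A) * ((n : ℝ) + x) ^ 2) : ℝ) : ℂ) := by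
    rw [Complex.ofReal_tsum]
    exact tsum_congr fun n => (Complex.ofReal_exp _).symm
  rw [e3] at key
  -- cpow of a positive real
  have e4 : (1 : ℂ) / ((A : ℂ))⁻¹ ^ (1/2 : ℂ) = ((Real.sqrt A⁻¹)⁻¹ : ℝ) := by
    rw [show ((A : ℂ))⁻¹ = ((A⁻¹ : ℝ) : ℂ) by rw [Complex.ofReal_inv]]
    rw [show ((A⁻¹ : ℝ) : ℂ) ^ (1/2 : ℂ) = ((A⁻¹ ^ (1/2 : ℝ) : ℝ) : ℂ) by
      rw [Complex.ofReal_cpow hA'.le]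
      norm_num]
    rw [← Real.sqrt_eq_rpow]
    push_cast
    rw [one_div]
  rw [e4] at key
  -- take real parts
  have hsum : Summable (fun n : ℤ =>
      cexp (-((π/A : ℝ) : ℂ) * (n : ℂ) ^ 2 - ((2 * π * x : ℝ) : ℂ) * (n : ℂ) * I)) := by
    exact summable_cgauss (π / A) (2 * π * x) (div_pos Real.pi_pos hA)
  have hre := congrArg Complex.re key
  rw [Complex.re_ofReal_mul, Complex.ofReal_re, Complex.re_tsum hsum] at hre
  have e5 : ∀ n : ℤ, (cexp (-((π/A : ℝ) : ℂ) * (n : ℂ) ^ 2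
      - ((2 * π * x : ℝ) : ℂ) * (n : ℂ) * I)).re
      = Real.exp (-(π / A) * (n : ℝ) ^ 2) * Real.cos (2 * π * n * x) := by
    intro n
    have : -((π/A : ℝ) : ℂ) * (n : ℂ) ^ 2 - ((2 * π * x : ℝ) : ℂ) * (n : ℂ) * I
        = ((-(π/A) * (n:ℝ)^2 : ℝ) : ℂ) + ((-(2 * π * x * n) : ℝ) : ℂ) * I := by
      push_cast
      ring
    rw [this, Complex.exp_add, ← Complex.ofReal_exp, Complex.re_ofReal_mul,
      Complex.exp_ofReal_mul_I_re, Real.cos_neg]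
    have : 2 * π * x * (n : ℝ) = 2 * π * n * x := by ring
    rw [this]
  rw [tsum_congr e5] at hre
  rw [hre]
  have hs : Real.sqrt A⁻¹ ≠ 0 := by
    positivity
  field_simp

end PoissonSection

lemma sq_natAbs (m : ℤ) : ((m.natAbs : ℝ)) ^ 2 = ((m : ℝ)) ^ 2 := by
  rw [Nat.cast_natAbs]
  exact_mod_cast _root_.sq_abs m

lemma zpow_pos_eq_exp {x : ℝ} (hx : 0 < x) (e : ℤ) :
    x ^ e = Real.exp (Real.log x * e) := by
  rw [← Real.rpow_intCast x e, Real.rpow_def_of_pos hx]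

lemma cast_half_sq (m : ℤ) : ((m * (m + 1) / 2 : ℤ) : ℝ) = (m : ℝ) * ((m : ℝ) + 1) / 2 := by
  have hdvd : (2 : ℤ) ∣ m * (m + 1) := (Int.even_mul_succ_self m).two_dvd
  rw [Int.cast_div_charZero hdvd]
  push_cast
  ring

lemma cast_half_sq' (m : ℤ) : ((m * (m - 1) / 2 : ℤ) : ℝ) = (m : ℝ) * ((m : ℝ) - 1) / 2 := by
  have hdvd : (2 : ℤ) ∣ m * (m - 1) := by
    have := (Int.even_mul_succ_self (m - 1)).two_dvd
    have h2 : (m - 1) * (m - 1 + 1) = m * (m - 1) := by ring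
    rwa [h2] at this
  rw [Int.cast_div_charZero hdvd]
  push_cast
  ring

/-- The Gaussian-sum representation of `u k`. -/
lemma gauss_rep {q : ℝ} (hq0 : 0 < q) (hq1 : q < 1) {n k : ℕ} (hk : 2 * k + 1 ≤ n) :
    q ^ ((k : ℝ) ^ 2 / n) * ramF (q ^ (n - 2 * k)) (q ^ (n + 2 * k))
      = ∑' m : ℤ, Real.exp (-(π * ((-Real.log q) * n / π))
          * ((m : ℝ) + (-((k : ℝ) / n))) ^ 2) := by
  have hn : 0 < n := by omega
  have hnR : (0 : ℝ) < n := by exact_mod_cast hn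
  have hlq : Real.log q < 0 := Real.log_neg hq0 hq1
  have ha : 0 < q ^ (n - 2 * k) := pow_pos hq0 _
  have hb : 0 < q ^ (n + 2 * k) := pow_pos hq0 _
  rw [ramF, ← tsum_mul_left]
  apply tsum_congr
  intro m
  rw [zpow_pos_eq_exp ha, zpow_pos_eq_exp hb, Real.log_pow, Real.log_pow,
    Real.rpow_def_of_pos hq0, ← Real.exp_add, ← Real.exp_add]
  congr 1
  rw [cast_half_sq, cast_half_sq']
  have hsub : ((n - 2 * k : ℕ) : ℝ) = (n : ℝ) - 2 * k := by
    have : 2 * k ≤ n := by omega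
    push_cast [Nat.cast_sub this]
    ring
  have hadd : ((n + 2 * k : ℕ) : ℝ) = (n : ℝ) + 2 * k := by push_cast; ring
  rw [hsub, hadd]
  have hπ : (π : ℝ) ≠ 0 := Real.pi_ne_zero
  field_simp
  ring

/-- Bridge: `u k` as a positive multiple of `Theta`. -/
lemma u_bridge {q : ℝ} (hq0 : 0 < q) (hq1 : q < 1) {n k : ℕ} (hk : 2 * k + 1 ≤ n) :
    q ^ ((k : ℝ) ^ 2 / n) * ramF (q ^ (n - 2 * k)) (q ^ (n + 2 * k))
      = Real.sqrt (((-Real.log q) * n / π))⁻¹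
        * Theta (Real.exp (-(π * π) / ((-Real.log q) * n))) (2 * π * k / n) := by
  have hn : 0 < n := by omega
  have hnR : (0 : ℝ) < n := by exact_mod_cast hn
  have hlq : Real.log q < 0 := Real.log_neg hq0 hq1
  have hc : 0 < -Real.log q := by linarith
  have hA : 0 < (-Real.log q) * n / π := by positivity
  rw [gauss_rep hq0 hq1 hk, poisson hA]
  congr 1
  rw [Theta]
  apply tsum_congr
  intro l
  have e1 : Real.exp (-(π / ((-Real.log q) * n / π)) * (l : ℝ) ^ 2)
      = Real.exp (-(π * π) / ((-Real.log q) * n)) ^ (l.natAbs ^ 2) := by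
    rw [← Real.exp_nat_mul]
    congr 1
    rw [show ((l.natAbs ^ 2 : ℕ) : ℝ) = ((l.natAbs : ℝ)) ^ 2 by push_cast; ring, sq_natAbs]
    have hπ : (π : ℝ) ≠ 0 := Real.pi_ne_zero
    field_simp
  have e2 : Real.cos (2 * π * l * (-((k : ℝ) / n))) = Real.cos (l * (2 * π * k / n)) := by
    rw [show 2 * π * (l : ℝ) * (-((k : ℝ) / n)) = -((l : ℝ) * (2 * π * k / n)) by ring,
      Real.cos_neg]
  rw [e1, e2]

lemma u_pos {q : ℝ} (hq0 : 0 < q) (hq1 : q < 1) {n k : ℕ} (hk : 2 * k + 1 ≤ n) :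
    0 < q ^ ((k : ℝ) ^ 2 / n) * ramF (q ^ (n - 2 * k)) (q ^ (n + 2 * k)) := by
  have hn : 0 < n := by omega
  have hnR : (0 : ℝ) < n := by exact_mod_cast hn
  have hlq : Real.log q < 0 := Real.log_neg hq0 hq1
  have hA : 0 < π * ((-Real.log q) * n / π) := by
    have := Real.pi_pos
    have h2 : 0 < -Real.log q := by linarith
    rw [mul_div_assoc']
    rw [mul_comm]
    positivity
  rw [gauss_rep hq0 hq1 hk]
  exact Summable.tsum_pos (summable_gauss _ _ hA) (fun m => (Real.exp_pos _).le) 0 (Real.exp_pos _)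

end UKAux

open UKAux in
theorem u_k_strict_anti (n : ℕ) (hn : 3 < n) (hodd : Odd n) (q : ℝ)
    (hq0 : 0 < q) (hq1 : q < 1) (u : ℕ → ℝ)
    (hu : ∀ k ≤ (n - 1) / 2,
      u k = q ^ ((k : ℝ) ^ 2 / n) * ramF (q ^ (n - 2 * k)) (q ^ (n + 2 * k))) :
    (∀ k, k < (n - 1) / 2 → u (k + 1) < u k) ∧ 0 < u ((n - 1) / 2) := by
  obtain ⟨t, ht⟩ := hodd
  have hlq : Real.log q < 0 := Real.log_neg hq0 hq1
  have hcpos : 0 < -Real.log q := by linarith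
  have hnR : (0 : ℝ) < n := by exact_mod_cast (by omega : 0 < n)
  constructor
  · intro k hk
    have hk1 : k + 1 ≤ (n - 1) / 2 := by omega
    have hk2 : 2 * k + 1 ≤ n := by omega
    have hk3 : 2 * (k + 1) + 1 ≤ n := by omega
    rw [hu k (by omega), hu (k + 1) hk1]
    rw [u_bridge hq0 hq1 hk2, u_bridge hq0 hq1 hk3]
    set R := Real.exp (-(π * π) / ((-Real.log q) * n)) with hR
    have hR0 : 0 < R := Real.exp_pos _
    have hR1 : R < 1 := by
      rw [hR, Real.exp_lt_one_iff, neg_div]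
      have : 0 < (π * π) / ((-Real.log q) * n) := by positivity
      linarith
    set θ₁ := 2 * π * (k : ℝ) / n with hθ₁
    set θ₂ := 2 * π * ((k + 1 : ℕ) : ℝ) / n with hθ₂
    have hγ : 0 < Real.sqrt (((-Real.log q) * n / π))⁻¹ := by
      apply Real.sqrt_pos.mpr
      have := Real.pi_pos
      positivity
    have h0 : 0 ≤ θ₁ := by positivity
    have h12 : θ₁ < θ₂ := by
      rw [hθ₁, hθ₂]
      have := Real.pi_pos
      have hlt : 2 * π * (k : ℝ) < 2 * π * ((k + 1 : ℕ) : ℝ) := by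
        have : (k : ℝ) < ((k + 1 : ℕ) : ℝ) := by exact_mod_cast Nat.lt_succ_self k
        nlinarith
      exact (div_lt_div_iff_of_pos_right hnR).mpr hlt
    have h2π : θ₂ ≤ π := by
      rw [hθ₂, div_le_iff₀ hnR]
      have h2n : (2 : ℝ) * ((k + 1 : ℕ) : ℝ) ≤ (n : ℝ) := by
        have : 2 * (k + 1) ≤ n := by omega
        exact_mod_cast this
      have := Real.pi_pos
      nlinarith
    -- positivity of Theta at θ₂
    have hTpos : 0 < Theta R θ₂ := by
      have h' := u_pos hq0 hq1 (n := n) (k := k + 1) hk3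
      rw [u_bridge hq0 hq1 hk3, ← hR, ← hθ₂] at h'
      nlinarith [h', hγ]
    have hmono := Theta_mono hR0 hR1 h0 h12.le h2π
    have hcos : Real.cos θ₂ < Real.cos θ₁ :=
      Real.cos_lt_cos_of_nonneg_of_le_pi h0 h2π h12
    have hfpos : 0 < 1 + 2 * R * Real.cos θ₂ + R ^ 2 := by
      nlinarith [Real.neg_one_le_cos θ₂, sq_nonneg (1 - R)]
    have hTT : Theta R θ₂ < Theta R θ₁ := by
      have hff : 1 + 2 * R * Real.cos θ₂ + R ^ 2 < 1 + 2 * R * Real.cos θ₁ + R ^ 2 := by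
        nlinarith
      by_contra hle
      push_neg at hle
      have c1 : Theta R θ₁ * (1 + 2 * R * Real.cos θ₂ + R ^ 2)
          ≤ Theta R θ₂ * (1 + 2 * R * Real.cos θ₂ + R ^ 2) :=
        mul_le_mul_of_nonneg_right hle hfpos.le
      have c2 : Theta R θ₂ * (1 + 2 * R * Real.cos θ₂ + R ^ 2)
          < Theta R θ₂ * (1 + 2 * R * Real.cos θ₁ + R ^ 2) :=
        mul_lt_mul_of_pos_left hff hTpos
      linarith [hmono, c1, c2]
    exact mul_lt_mul_of_pos_left hTT hγ
  · have hK : 2 * ((n - 1) / 2) + 1 ≤ n := by omega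
    rw [hu ((n - 1) / 2) (le_refl _)]
    exact u_pos hq0 hq1 hK
end

section
/- For 0 < q < 1, define u := 2q^{1/7} f(q⁵, q⁹)/φ(q⁷), v := 2q^{4/7} f(q³, q¹¹)/φ(q⁷), and w := 2q^{9/7} f(q, q¹³)/φ(q⁷). Then 2 > u > v > w > 0. -/
open Real

/-- Ramanujan's theta function `φ(q) = ∑_{n ∈ ℤ} q^(n²)`. -/
noncomputable def phi (q : ℝ) : ℝ := ∑' n : ℤ, q ^ (n ^ 2)

lemma summable_gauss_nat {c y : ℝ} (hc : 0 < c) (hy : 0 ≤ y) :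
    Summable (fun n : ℕ => exp (-c * ((n : ℝ) + y) ^ 2)) := by
  have h1 : Summable (fun n : ℕ => (exp (-c)) ^ n) :=
    summable_geometric_of_lt_one (exp_nonneg _) (exp_lt_one_iff.2 (by linarith))
  refine Summable.of_nonneg_of_le (fun n => (exp_nonneg _)) (fun n => ?_) h1
  rw [← Real.exp_nat_mul]
  apply exp_le_exp.2
  have hn : (n : ℝ) ≥ 0 := Nat.cast_nonneg n
  have h2 : (n : ℝ) ≤ (n : ℝ) ^ 2 := by
    have := Nat.le_self_pow (two_ne_zero) n
    exact_mod_cast this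
  nlinarith [mul_nonneg hn hy, sq_nonneg y]

lemma summable_gauss_int {c x : ℝ} (hc : 0 < c) (hx0 : 0 ≤ x) (hx1 : x ≤ 1) :
    Summable (fun n : ℤ => exp (-c * ((n : ℝ) + x) ^ 2)) := by
  apply Summable.of_nat_of_neg
  · exact_mod_cast summable_gauss_nat hc hx0
  · rw [← summable_nat_add_iff 1]
    have := summable_gauss_nat hc (y := 1 - x) (by linarith)
    apply this.congr
    intro n
    push_cast
    ring_nf

lemma summable_gauss_int0 {c : ℝ} (hc : 0 < c) :
    Summable (fun n : ℤ => exp (-c * (n : ℝ) ^ 2)) := by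
  have := summable_gauss_int hc (x := 0) le_rfl zero_le_one
  simpa using this

lemma poisson {T : ℝ} (hT : 0 < T) (x : ℝ) :
    ∑' n : ℤ, exp (-T * ((n : ℝ) + x) ^ 2)
      = Real.sqrt (π / T) * ∑' n : ℤ, exp (-(π ^ 2 / T) * (n : ℝ) ^ 2) * Real.cos (2 * π * n * x) := by
  have hπ : (0:ℝ) < π := pi_pos
  have hπc : (π : ℂ) ≠ 0 := Complex.ofReal_ne_zero.2 hπ.ne'
  set a : ℝ := T / π with ha_def
  have ha : 0 < a := div_pos hT hπ
  have hac : (a : ℂ) ≠ 0 := Complex.ofReal_ne_zero.2 ha.ne'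
  set b : ℝ := -(T * x) / π with hb_def
  have key := Complex.tsum_exp_neg_quadratic (a := (a : ℂ)) (by simpa using ha) (b : ℂ)
  -- rewrite LHS of key
  have hL : ∀ n : ℤ, Complex.exp (-(π:ℂ) * (a:ℂ) * (n:ℂ) ^ 2 + 2 * (π:ℂ) * (b:ℂ) * (n:ℂ))
      = ((exp (T * x ^ 2) * exp (-T * ((n : ℝ) + x) ^ 2) : ℝ) : ℂ) := by
    intro n
    have h1 : (exp (T * x ^ 2) * exp (-T * ((n : ℝ) + x) ^ 2)) = exp (-T * (n:ℝ) ^ 2 - 2 * T * x * n) := by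
      rw [← Real.exp_add]; ring_nf
    rw [h1, Complex.ofReal_exp]
    congr 1
    rw [ha_def, hb_def]
    push_cast
    field_simp
    ring
  -- compute the argument of RHS terms
  have harg : ∀ n : ℤ, -(π:ℂ) / (a:ℂ) * ((n:ℂ) + Complex.I * (b:ℂ)) ^ 2
      = ((-(π / a) * ((n : ℝ) ^ 2 - b ^ 2) : ℝ) : ℂ)
        + ((-(π / a) * (2 * (n:ℝ) * b) : ℝ) : ℂ) * Complex.I := by
    intro n
    have hI : Complex.I ^ 2 = -1 := Complex.I_sq
    push_cast
    field_simp
    ring_nf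
    rw [hI]
    ring
  have hre : ∀ n : ℤ, (-(π:ℂ) / (a:ℂ) * ((n:ℂ) + Complex.I * (b:ℂ)) ^ 2).re
      = -(π / a) * ((n : ℝ) ^ 2 - b ^ 2) := by
    intro n; rw [harg n]; simp [← Complex.ofReal_pow]
  have him : ∀ n : ℤ, (-(π:ℂ) / (a:ℂ) * ((n:ℂ) + Complex.I * (b:ℂ)) ^ 2).im
      = -(π / a) * (2 * (n:ℝ) * b) := by
    intro n; rw [harg n]; simp [← Complex.ofReal_pow]
  -- facts: π/a = π²/T, (π/a) * b² = T x², (π/a) * 2 n b = -2πnx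
  have hpa : π / a = π ^ 2 / T := by rw [ha_def]; field_simp
  have hb2 : (π / a) * b ^ 2 = T * x ^ 2 := by
    rw [hpa, hb_def]; field_simp
  have hnb : ∀ n : ℤ, -(π / a) * (2 * (n:ℝ) * b) = 2 * π * n * x := by
    intro n; rw [hpa, hb_def]; field_simp
  -- summability of RHS complex series
  have hS : Summable (fun n : ℤ => Complex.exp (-(π:ℂ) / (a:ℂ) * ((n:ℂ) + Complex.I * (b:ℂ)) ^ 2)) := by
    apply Summable.of_norm
    have : ∀ n : ℤ, ‖Complex.exp (-(π:ℂ) / (a:ℂ) * ((n:ℂ) + Complex.I * (b:ℂ)) ^ 2)‖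
        = exp (T * x ^ 2) * exp (-(π ^ 2 / T) * (n:ℝ) ^ 2) := by
      intro n
      rw [Complex.norm_exp, hre n, ← Real.exp_add]
      congr 1
      rw [← hb2, hpa]
      ring
    rw [funext this]
    exact ((summable_gauss_int0 (div_pos (pow_pos hπ 2) hT)).mul_left _)
  -- real part of RHS terms
  have hRre : ∀ n : ℤ, (Complex.exp (-(π:ℂ) / (a:ℂ) * ((n:ℂ) + Complex.I * (b:ℂ)) ^ 2)).re
      = exp (T * x ^ 2) * (exp (-(π ^ 2 / T) * (n:ℝ) ^ 2) * Real.cos (2 * π * n * x)) := by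
    intro n
    rw [Complex.exp_re, hre n, him n, hnb n]
    have h2 : -(π / a) * ((n : ℝ) ^ 2 - b ^ 2) = T * x ^ 2 + -(π ^ 2 / T) * (n:ℝ) ^ 2 := by
      rw [← hb2, hpa]; ring
    rw [h2, Real.exp_add]; ring
  -- rewrite key
  rw [tsum_congr hL, ← Complex.ofReal_tsum] at key
  have hkey2 := congrArg Complex.re key
  rw [Complex.ofReal_re] at hkey2
  -- RHS re
  have hcpow : ((a:ℂ)) ^ (1/2 : ℂ) = ((a ^ (1/2 : ℝ) : ℝ) : ℂ) := by
    rw [Complex.ofReal_cpow ha.le]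
    norm_num
  rw [hcpow] at hkey2
  have h1c : (1 : ℂ) / ((a ^ (1/2 : ℝ) : ℝ) : ℂ) = (((1 : ℝ) / (a ^ (1/2 : ℝ)) : ℝ) : ℂ) := by
    push_cast; ring
  rw [h1c, Complex.re_ofReal_mul, Complex.re_tsum hS, tsum_congr hRre, tsum_mul_left] at hkey2
  rw [tsum_mul_left] at hkey2
  have hexp_ne : exp (T * x ^ 2) ≠ 0 := (exp_pos _).ne'
  have hmain : ∑' n : ℤ, exp (-T * ((n : ℝ) + x) ^ 2)
      = 1 / a ^ (1/2 : ℝ) * ∑' n : ℤ, exp (-(π ^ 2 / T) * (n:ℝ) ^ 2) * Real.cos (2 * π * n * x) := by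
    apply mul_left_cancel₀ hexp_ne
    rw [hkey2]; ring
  rw [hmain]
  congr 1
  rw [sqrt_eq_rpow, ha_def, one_div, ← Real.inv_rpow (div_nonneg hT.le hπ.le), inv_div]

lemma summable_gauss_cos {c : ℝ} (hc : 0 < c) (g : ℤ → ℝ) (hg : ∀ n, |g n| ≤ 2) :
    Summable (fun n : ℤ => exp (-c * (n : ℝ) ^ 2) * g n) := by
  apply Summable.of_abs
  refine Summable.of_nonneg_of_le (fun n => abs_nonneg _) (fun n => ?_)
    ((summable_gauss_int0 hc).mul_left 2)
  rw [abs_mul, abs_of_pos (exp_pos _)]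
  have := hg n
  have h1 := exp_pos (-c * (n : ℝ) ^ 2)
  nlinarith [abs_nonneg (g n)]


lemma geo_lower (h : ℕ → ℝ) (hsum : Summable h) {C s : ℝ} (hC : 0 ≤ C) (hs0 : 0 ≤ s) (hs1 : s < 1)
    (hb : ∀ n, -(C * s ^ n) ≤ h n) : -(C * (1 - s)⁻¹) ≤ ∑' n, h n := by
  have h1 : Summable (fun n : ℕ => -(C * s ^ n)) :=
    (((summable_geometric_of_lt_one hs0 hs1).mul_left C)).neg
  have h2 := Summable.tsum_le_tsum hb h1 hsum
  calc -(C * (1 - s)⁻¹) = ∑' n : ℕ, -(C * s ^ n) := by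
        rw [tsum_neg, tsum_mul_left, tsum_geometric_of_lt_one hs0 hs1]
    _ ≤ ∑' n, h n := h2

/-- split of an even function's sum over ℤ -/
lemma tsum_int_even (f : ℤ → ℝ) (hf : ∀ n : ℤ, f (-n) = f n)
    (h1 : Summable fun n : ℕ => f (n : ℤ)) :
    ∑' n : ℤ, f n = f 0 + 2 * ∑' n : ℕ, f ((n : ℤ) + 1) := by
  have hshift : Summable (fun n : ℕ => f ((n : ℤ) + 1)) := by
    have := (summable_nat_add_iff (f := fun n : ℕ => f (n : ℤ)) 1).2 h1
    apply this.congr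
    intro n; push_cast; ring_nf
  have h2 : Summable (fun n : ℕ => f (-((n : ℤ) + 1))) := by
    apply hshift.congr
    intro n; rw [hf]
  rw [tsum_of_nat_of_neg_add_one h1 h2]
  rw [Summable.tsum_eq_zero_add h1]
  have h3 : ∑' n : ℕ, f (-((n : ℤ) + 1)) = ∑' n : ℕ, f ((n : ℤ) + 1) :=
    tsum_congr fun n => hf _
  have h4 : ∑' n : ℕ, f (((n : ℕ) + 1 : ℕ) : ℤ) = ∑' n : ℕ, f ((n : ℤ) + 1) :=
    tsum_congr fun n => by push_cast; ring_nf
  push_cast at *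
  rw [h3, h4]
  ring

lemma key_cos_one {a : ℝ} (ha : 1 ≤ a) {g : ℤ → ℝ} (heven : ∀ n, g (-n) = g n) (hg0 : g 0 = 0)
    (hgb : ∀ n, |g n| ≤ 2) (hg1 : (0.36 : ℝ) ≤ g 1) :
    0 < ∑' n : ℤ, exp (-a * (n : ℝ) ^ 2) * g n := by
  have ha0 : (0 : ℝ) < a := by linarith
  set f : ℤ → ℝ := fun n => exp (-a * (n : ℝ) ^ 2) * g n with hfdef
  have hfsum : Summable f := summable_gauss_cos ha0 g hgb
  have hfeven : ∀ n : ℤ, f (-n) = f n := by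
    intro n
    simp only [hfdef]
    rw [heven]
    push_cast
    ring_nf
  have hfnat : Summable (fun n : ℕ => f (n : ℤ)) :=
    hfsum.comp_injective (fun x y h => by exact_mod_cast h)
  have hsplit := tsum_int_even f hfeven hfnat
  have hshift1 : Summable (fun n : ℕ => f ((n : ℤ) + 1)) := by
    have := (summable_nat_add_iff (f := fun n : ℕ => f (n : ℤ)) 1).2 hfnat
    apply this.congr
    intro n; push_cast; ring_nf
  have hshift2 : Summable (fun n : ℕ => f ((n : ℤ) + 2)) := by
    have := (summable_nat_add_iff (f := fun n : ℕ => f (n : ℤ)) 2).2 hfnat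
    apply this.congr
    intro n; push_cast; ring_nf
  have hsplit2 : ∑' n : ℕ, f ((n : ℤ) + 1) = f 1 + ∑' n : ℕ, f ((n : ℤ) + 2) := by
    rw [Summable.tsum_eq_zero_add hshift1]
    norm_num
    apply tsum_congr
    intro n; push_cast; ring_nf
  -- tail bound
  set s : ℝ := exp (-(4 * a)) with hsdef
  have hs0 : 0 ≤ s := exp_nonneg _
  have hs1 : s < 1 := exp_lt_one_iff.2 (by linarith)
  have htail : -((2 * s) * (1 - s)⁻¹) ≤ ∑' n : ℕ, f ((n : ℤ) + 2) := by
    apply geo_lower _ hshift2 (by linarith) hs0 hs1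
    intro n
    have hb : |f ((n : ℤ) + 2)| ≤ 2 * s * s ^ n := by
      simp only [hfdef]
      rw [abs_mul, abs_of_pos (exp_pos _)]
      have h1 : |g ((n : ℤ) + 2)| ≤ 2 := hgb _
      have h2 : exp (-a * (((n : ℤ) + 2 : ℤ) : ℝ) ^ 2) ≤ s * s ^ n := by
        rw [hsdef, ← Real.exp_nat_mul, ← Real.exp_add]
        apply exp_le_exp.2
        push_cast
        have : ((n : ℝ) + 2) ^ 2 ≥ 4 * n + 4 := by nlinarith [sq_nonneg (n : ℝ)]
        nlinarith [Nat.cast_nonneg (α := ℝ) n]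
      calc exp (-a * (((n : ℤ) + 2 : ℤ) : ℝ) ^ 2) * |g ((n : ℤ) + 2)|
          ≤ exp (-a * (((n : ℤ) + 2 : ℤ) : ℝ) ^ 2) * 2 := by
            apply mul_le_mul_of_nonneg_left h1 (exp_pos _).le
        _ ≤ (s * s ^ n) * 2 := by
            apply mul_le_mul_of_nonneg_right _ (by norm_num)
            exact_mod_cast h2
        _ = 2 * s * s ^ n := by ring
    have := abs_le.1 hb
    linarith [this.1]
  -- main term
  have hr1 : f 1 ≥ 0.36 * exp (-a) := by
    simp only [hfdef]
    push_cast
    have := exp_pos (-a * (1 : ℝ) ^ 2)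
    norm_num
    nlinarith [exp_pos (-a)]
  -- numeric finish
  have hf0 : f 0 = 0 := by simp [hfdef, hg0]
  set r : ℝ := exp (-a) with hrdef
  have hr0 : 0 < r := exp_pos _
  have hrs : s = r ^ 4 := by
    rw [hsdef, hrdef, ← Real.exp_nat_mul]
    norm_num
  have hre : r ≤ 0.368 := by
    have h1 : r ≤ exp (-1) := exp_le_exp.2 (by linarith)
    have h2 : exp (-1) ≤ 0.368 := by
      rw [Real.exp_neg]
      rw [inv_le_comm₀ (exp_pos 1) (by norm_num)]
      calc (0.368 : ℝ)⁻¹ ≤ 2.7182818283 := by norm_num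
        _ ≤ exp 1 := Real.exp_one_gt_d9.le
    linarith
  have hnum : 0.36 * r - 2 * s * (1 - s)⁻¹ > 0 := by
    rw [hrs]
    rw [gt_iff_lt, sub_pos]
    rw [mul_inv_lt_iff₀ (by nlinarith [pow_le_pow_left₀ hr0.le hre 4])]
    have h3 : r ^ 3 ≤ 0.368 ^ 3 := pow_le_pow_left₀ hr0.le hre 3
    have h4 : r ^ 4 ≤ 0.368 ^ 4 := pow_le_pow_left₀ hr0.le hre 4
    nlinarith
  rw [hsplit, hsplit2, hf0]
  have := htail
  nlinarith [hr1]

lemma summable_seven {bb : ℝ} (hb : 0 < bb) {k : ℝ} (hk0 : 0 ≤ k) (hk7 : k ≤ 7) :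
    Summable (fun m : ℤ => exp (-bb * (7 * (m : ℝ) + k) ^ 2)) := by
  have h7 : (0:ℝ) ≤ k / 7 := by linarith
  have h7' : k / 7 ≤ 1 := by linarith
  have := summable_gauss_int (c := 49 * bb) (x := k / 7) (by linarith) h7 h7'
  apply this.congr
  intro n
  congr 1
  ring

/-- numeric bounds on Q = exp(-bb) for bb > π²/49 -/
lemma Qbounds {bb : ℝ} (hbb : π ^ 2 / 49 < bb) :
    exp (-bb) ^ 3 ≤ 0.625 ∧ exp (-bb) ^ 5 ≤ 0.499 ∧ exp (-bb) ^ 12 ≤ 0.294 ∧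
      exp (-bb) ^ 24 ≤ 0.019 := by
  have hpi : (3.141592 : ℝ) < π := Real.pi_gt_d6
  have hpi2 : (9.86 : ℝ) < π ^ 2 := by nlinarith
  have hbl : (0.201 : ℝ) < bb := by nlinarith
  have key : ∀ (k : ℕ) (y z : ℝ), 0 ≤ y → y ≤ k * bb → (1 + y) * z ≥ 1 → 0 < z →
      exp (-bb) ^ k ≤ z := by
    intro k y z hy hky hz hz0
    rw [← Real.exp_nat_mul]
    have h1 : exp (k * -bb) ≤ exp (-y) := exp_le_exp.2 (by linarith)
    have h2 : exp (-y) ≤ z := by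
      have hprod : exp (-y) * exp y = 1 := by rw [← Real.exp_add]; simp
      have h5 : 1 ≤ exp y * z := by nlinarith [Real.add_one_le_exp y]
      nlinarith [exp_pos y, exp_pos (-y), mul_le_mul_of_nonneg_left h5 (exp_pos (-y)).le]
    linarith
  refine ⟨key 3 0.603 0.625 (by norm_num) (by linarith) (by norm_num) (by norm_num),
    key 5 1.005 0.499 (by norm_num) (by linarith) (by norm_num) (by norm_num),
    key 12 2.412 0.294 (by norm_num) (by linarith) (by norm_num) (by norm_num), ?_⟩
  -- Q^24 ≤ 0.019 needs exp bound via e > 2.718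
  have h24 : exp (-bb) ^ 24 = exp ((24:ℕ) * -bb) := (Real.exp_nat_mul _ 24).symm
  rw [h24]
  have h1 : exp ((24:ℕ) * -bb) ≤ exp (-4) := exp_le_exp.2 (by push_cast; nlinarith)
  have h2 : exp (-4 : ℝ) ≤ 0.019 := by
    rw [show (-4 : ℝ) = (4:ℕ) * (-1) by norm_num, Real.exp_nat_mul]
    have h3 : exp (-1) ≤ 0.368 := by
      rw [Real.exp_neg, inv_le_comm₀ (exp_pos 1) (by norm_num)]
      calc (0.368 : ℝ)⁻¹ ≤ 2.7182818283 := by norm_num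
        _ ≤ exp 1 := Real.exp_one_gt_d9.le
    calc exp (-1:ℝ) ^ 4 ≤ 0.368 ^ 4 := by
          apply pow_le_pow_left₀ (exp_nonneg _) h3
      _ ≤ 0.019 := by norm_num
  exact h1.trans h2

lemma exp_le_QQ {bb : ℝ} (hb : 0 ≤ bb) {t : ℝ} (e : ℕ) (n : ℕ) (ht : (e : ℝ) + 50 * n ≤ t) :
    exp (-bb * t) ≤ exp (-bb) ^ e * (exp (-bb) ^ 50) ^ n := by
  rw [← Real.exp_nat_mul, ← Real.exp_nat_mul, ← Real.exp_nat_mul, ← Real.exp_add]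
  apply exp_le_exp.2
  push_cast
  nlinarith [mul_le_mul_of_nonneg_left ht hb]

lemma point_bound {bb : ℝ} (hb : 0 ≤ bb) (A B : ℝ) (e n : ℕ) (hB : (e : ℝ) + 50 * n ≤ B) :
    -(exp (-bb) ^ e * (exp (-bb) ^ 50) ^ n) ≤ exp (-bb * A) - exp (-bb * B) := by
  have h1 := exp_le_QQ hb e n hB
  have h2 := exp_pos (-bb * A)
  linarith

lemma pow_le_019 {bb : ℝ} (hbb : π ^ 2 / 49 < bb) {k : ℕ} (hk : 24 ≤ k) :
    exp (-bb) ^ k ≤ 0.019 := by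
  have h24 := (Qbounds hbb).2.2.2
  have hb0 : 0 < bb := by
    have hpi : (3.141592 : ℝ) < π := Real.pi_gt_d6
    nlinarith
  calc exp (-bb) ^ k ≤ exp (-bb) ^ 24 :=
        pow_le_pow_of_le_one (exp_nonneg _) (exp_lt_one_iff.2 (by linarith)).le hk
    _ ≤ 0.019 := h24

lemma direct_A {bb : ℝ} (hbb : π ^ 2 / 49 < bb) :
    0 < ∑' m : ℤ, (exp (-bb * (7 * (m : ℝ) + 1) ^ 2) - exp (-bb * (7 * (m : ℝ) + 2) ^ 2)) := by
  have hpi : (3.141592 : ℝ) < π := Real.pi_gt_d6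
  have hb0 : 0 < bb := by nlinarith
  obtain ⟨h3, h5, h12, h24⟩ := Qbounds hbb
  set Q : ℝ := exp (-bb) with hQdef
  have hQ0 : 0 < Q := exp_pos _
  have hQ1 : Q < 1 := exp_lt_one_iff.2 (by linarith)
  set f : ℤ → ℝ := fun m => exp (-bb * (7 * (m : ℝ) + 1) ^ 2) - exp (-bb * (7 * (m : ℝ) + 2) ^ 2)
    with hfdef
  have hf1 : Summable (fun m : ℤ => exp (-bb * (7 * (m : ℝ) + 1) ^ 2)) :=
    summable_seven hb0 (by norm_num) (by norm_num)
  have hf2 : Summable (fun m : ℤ => exp (-bb * (7 * (m : ℝ) + 2) ^ 2)) :=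
    summable_seven hb0 (by norm_num) (by norm_num)
  have hfZ : Summable f := hf1.sub hf2
  have hfnat : Summable (fun n : ℕ => f (n : ℤ)) :=
    hfZ.comp_injective (fun x y h => by exact_mod_cast h)
  have hfneg : Summable (fun n : ℕ => f (-((n : ℤ) + 1))) :=
    hfZ.comp_injective (fun x y h => by
      simp only [neg_inj, add_left_inj] at h; exact_mod_cast h)
  have hfshift : Summable (fun n : ℕ => f ((n : ℤ) + 1)) :=
    hfZ.comp_injective (fun x y h => by
      simp only [add_left_inj] at h; exact_mod_cast h)
  have hsplit : ∑' m : ℤ, f m = (f 0 + ∑' n : ℕ, f ((n : ℤ) + 1)) + ∑' n : ℕ, f (-((n : ℤ) + 1)) := by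
    rw [tsum_of_nat_of_neg_add_one hfnat hfneg, Summable.tsum_eq_zero_add hfnat]
    push_cast
    ring
  have hs0 : (0:ℝ) ≤ Q ^ 50 := pow_nonneg hQ0.le _
  have hs1 : Q ^ 50 < 1 := pow_lt_one₀ hQ0.le hQ1 (by norm_num)
  have htail1 : -(Q ^ 64 * (1 - Q ^ 50)⁻¹) ≤ ∑' n : ℕ, f ((n : ℤ) + 1) := by
    apply geo_lower _ hfshift (pow_nonneg hQ0.le _) hs0 hs1
    intro n
    have := point_bound hb0.le ((7 * ((n : ℝ) + 1) + 1) ^ 2) ((7 * ((n : ℝ) + 1) + 2) ^ 2) 64 n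
      (by push_cast; nlinarith [Nat.cast_nonneg (α := ℝ) n])
    simp only [hfdef]
    push_cast
    convert this using 3 <;> push_cast <;> ring
  have htail2 : -(Q ^ 25 * (1 - Q ^ 50)⁻¹) ≤ ∑' n : ℕ, f (-((n : ℤ) + 1)) := by
    apply geo_lower _ hfneg (pow_nonneg hQ0.le _) hs0 hs1
    intro n
    have := point_bound hb0.le ((7 * (-((n : ℝ) + 1)) + 1) ^ 2) ((7 * (-((n : ℝ) + 1)) + 2) ^ 2) 25 n
      (by push_cast; nlinarith [Nat.cast_nonneg (α := ℝ) n])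
    simp only [hfdef]
    push_cast
    convert this using 3 <;> push_cast <;> ring
  -- evaluate f 0
  have hf0 : f 0 = Q - Q ^ 4 := by
    have e1 : exp (-bb * (7 * ((0:ℤ) : ℝ) + 1) ^ 2) = Q := by rw [hQdef]; congr 1; push_cast; ring
    have e2 : exp (-bb * (7 * ((0:ℤ) : ℝ) + 2) ^ 2) = Q ^ 4 := by
      rw [hQdef, ← Real.exp_nat_mul]; congr 1; push_cast; ring
    simp only [hfdef]
    rw [e1, e2]
  -- numerics
  have h63 : Q ^ 63 ≤ 0.019 := pow_le_019 hbb (by norm_num)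
  have h50 : Q ^ 50 ≤ 0.019 := pow_le_019 hbb (by norm_num)
  have hd : (1 - Q ^ 50)⁻¹ ≤ 1.02 := by
    rw [inv_le_comm₀ (by linarith) (by norm_num)]
    norm_num
    linarith
  have hd0 : (0:ℝ) ≤ (1 - Q ^ 50)⁻¹ := inv_nonneg.2 (by linarith)
  have h64Q : Q ^ 64 ≤ 0.019 * Q := by
    calc Q ^ 64 = Q ^ 63 * Q := by ring
      _ ≤ 0.019 * Q := mul_le_mul_of_nonneg_right h63 hQ0.le
  have h25Q : Q ^ 25 ≤ 0.019 * Q := by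
    calc Q ^ 25 = Q ^ 24 * Q := by ring
      _ ≤ 0.019 * Q := mul_le_mul_of_nonneg_right h24 hQ0.le
  have h4Q : Q ^ 4 ≤ 0.625 * Q := by
    calc Q ^ 4 = Q ^ 3 * Q := by ring
      _ ≤ 0.625 * Q := mul_le_mul_of_nonneg_right h3 hQ0.le
  have hm1 : Q ^ 64 * (1 - Q ^ 50)⁻¹ ≤ 0.019 * Q * 1.02 :=
    mul_le_mul h64Q hd hd0 (by positivity)
  have hm2 : Q ^ 25 * (1 - Q ^ 50)⁻¹ ≤ 0.019 * Q * 1.02 :=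
    mul_le_mul h25Q hd hd0 (by positivity)
  rw [hsplit, hf0]
  nlinarith [hQ0]

lemma direct_B {bb : ℝ} (hbb : π ^ 2 / 49 < bb) :
    0 < ∑' m : ℤ, (exp (-bb * (7 * (m : ℝ) + 2) ^ 2) - exp (-bb * (7 * (m : ℝ) + 3) ^ 2)) := by
  have hpi : (3.141592 : ℝ) < π := Real.pi_gt_d6
  have hb0 : 0 < bb := by nlinarith
  obtain ⟨h3, h5, h12, h24⟩ := Qbounds hbb
  set Q : ℝ := exp (-bb) with hQdef
  have hQ0 : 0 < Q := exp_pos _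
  have hQ1 : Q < 1 := exp_lt_one_iff.2 (by linarith)
  set f : ℤ → ℝ := fun m => exp (-bb * (7 * (m : ℝ) + 2) ^ 2) - exp (-bb * (7 * (m : ℝ) + 3) ^ 2)
    with hfdef
  have hf1 : Summable (fun m : ℤ => exp (-bb * (7 * (m : ℝ) + 2) ^ 2)) :=
    summable_seven hb0 (by norm_num) (by norm_num)
  have hf2 : Summable (fun m : ℤ => exp (-bb * (7 * (m : ℝ) + 3) ^ 2)) :=
    summable_seven hb0 (by norm_num) (by norm_num)
  have hfZ : Summable f := hf1.sub hf2
  have hfnat : Summable (fun n : ℕ => f (n : ℤ)) :=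
    hfZ.comp_injective (fun x y h => by exact_mod_cast h)
  have hfneg : Summable (fun n : ℕ => f (-((n : ℤ) + 1))) :=
    hfZ.comp_injective (fun x y h => by
      simp only [neg_inj, add_left_inj] at h; exact_mod_cast h)
  have hfneg2 : Summable (fun n : ℕ => f (-((n : ℤ) + 2))) :=
    hfZ.comp_injective (fun x y h => by
      simp only [neg_inj, add_left_inj] at h; exact_mod_cast h)
  have hfshift : Summable (fun n : ℕ => f ((n : ℤ) + 1)) :=
    hfZ.comp_injective (fun x y h => by
      simp only [add_left_inj] at h; exact_mod_cast h)
  have hsplit : ∑' m : ℤ, f m = (f 0 + ∑' n : ℕ, f ((n : ℤ) + 1))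
      + (f (-1) + ∑' n : ℕ, f (-((n : ℤ) + 2))) := by
    rw [tsum_of_nat_of_neg_add_one hfnat hfneg, Summable.tsum_eq_zero_add hfnat,
      Summable.tsum_eq_zero_add hfneg]
    have c1 : ∀ n : ℕ, f (((n + 1 : ℕ) : ℤ)) = f ((n : ℤ) + 1) :=
      fun n => congrArg f (by push_cast; ring)
    have c2 : ∀ n : ℕ, f (-(((n + 1 : ℕ) : ℤ) + 1)) = f (-((n : ℤ) + 2)) :=
      fun n => congrArg f (by push_cast; ring)
    rw [tsum_congr c1, tsum_congr c2]
    have c0 : f (((0 : ℕ) : ℤ)) = f 0 := congrArg f (by norm_num)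
    have c0' : f (-(((0 : ℕ) : ℤ) + 1)) = f (-1) := congrArg f (by norm_num)
    rw [c0, c0']
  have hs0 : (0:ℝ) ≤ Q ^ 50 := pow_nonneg hQ0.le _
  have hs1 : Q ^ 50 < 1 := pow_lt_one₀ hQ0.le hQ1 (by norm_num)
  have htail1 : -(Q ^ 81 * (1 - Q ^ 50)⁻¹) ≤ ∑' n : ℕ, f ((n : ℤ) + 1) := by
    apply geo_lower _ hfshift (pow_nonneg hQ0.le _) hs0 hs1
    intro n
    have := point_bound hb0.le ((7 * ((n : ℝ) + 1) + 2) ^ 2) ((7 * ((n : ℝ) + 1) + 3) ^ 2) 81 n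
      (by push_cast; nlinarith [Nat.cast_nonneg (α := ℝ) n])
    simp only [hfdef]
    push_cast
    convert this using 3
  have htail2 : -(Q ^ 121 * (1 - Q ^ 50)⁻¹) ≤ ∑' n : ℕ, f (-((n : ℤ) + 2)) := by
    apply geo_lower _ hfneg2 (pow_nonneg hQ0.le _) hs0 hs1
    intro n
    have := point_bound hb0.le ((7 * (-((n : ℝ) + 2)) + 2) ^ 2) ((7 * (-((n : ℝ) + 2)) + 3) ^ 2) 121 n
      (by push_cast; nlinarith [Nat.cast_nonneg (α := ℝ) n])
    simp only [hfdef]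
    push_cast
    convert this using 3
  have hf0 : f 0 = Q ^ 4 - Q ^ 9 := by
    have e1 : exp (-bb * (7 * ((0:ℤ) : ℝ) + 2) ^ 2) = Q ^ 4 := by
      rw [hQdef, ← Real.exp_nat_mul]; congr 1; push_cast; ring
    have e2 : exp (-bb * (7 * ((0:ℤ) : ℝ) + 3) ^ 2) = Q ^ 9 := by
      rw [hQdef, ← Real.exp_nat_mul]; congr 1; push_cast; ring
    simp only [hfdef]
    rw [e1, e2]
  have hfm1 : f (-1) = Q ^ 25 - Q ^ 16 := by
    have e1 : exp (-bb * (7 * ((-1:ℤ) : ℝ) + 2) ^ 2) = Q ^ 25 := by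
      rw [hQdef, ← Real.exp_nat_mul]; congr 1; push_cast; ring
    have e2 : exp (-bb * (7 * ((-1:ℤ) : ℝ) + 3) ^ 2) = Q ^ 16 := by
      rw [hQdef, ← Real.exp_nat_mul]; congr 1; push_cast; ring
    simp only [hfdef]
    rw [e1, e2]
  have h77 : Q ^ 77 ≤ 0.019 := pow_le_019 hbb (by norm_num)
  have h117 : Q ^ 117 ≤ 0.019 := pow_le_019 hbb (by norm_num)
  have h50 : Q ^ 50 ≤ 0.019 := pow_le_019 hbb (by norm_num)
  have hd : (1 - Q ^ 50)⁻¹ ≤ 1.02 := by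
    rw [inv_le_comm₀ (by linarith) (by norm_num)]
    norm_num
    linarith
  have hd0 : (0:ℝ) ≤ (1 - Q ^ 50)⁻¹ := inv_nonneg.2 (by linarith)
  have hQ4 : (0:ℝ) < Q ^ 4 := pow_pos hQ0 _
  have h81Q : Q ^ 81 ≤ 0.019 * Q ^ 4 := by
    calc Q ^ 81 = Q ^ 77 * Q ^ 4 := by ring
      _ ≤ 0.019 * Q ^ 4 := mul_le_mul_of_nonneg_right h77 hQ4.le
  have h121Q : Q ^ 121 ≤ 0.019 * Q ^ 4 := by
    calc Q ^ 121 = Q ^ 117 * Q ^ 4 := by ring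
      _ ≤ 0.019 * Q ^ 4 := mul_le_mul_of_nonneg_right h117 hQ4.le
  have h9Q : Q ^ 9 ≤ 0.499 * Q ^ 4 := by
    calc Q ^ 9 = Q ^ 5 * Q ^ 4 := by ring
      _ ≤ 0.499 * Q ^ 4 := mul_le_mul_of_nonneg_right h5 hQ4.le
  have h16Q : Q ^ 16 ≤ 0.294 * Q ^ 4 := by
    calc Q ^ 16 = Q ^ 12 * Q ^ 4 := by ring
      _ ≤ 0.294 * Q ^ 4 := mul_le_mul_of_nonneg_right h12 hQ4.le
  have hm1 : Q ^ 81 * (1 - Q ^ 50)⁻¹ ≤ 0.019 * Q ^ 4 * 1.02 :=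
    mul_le_mul h81Q hd hd0 (by positivity)
  have hm2 : Q ^ 121 * (1 - Q ^ 50)⁻¹ ≤ 0.019 * Q ^ 4 * 1.02 :=
    mul_le_mul h121Q hd hd0 (by positivity)
  have hQ25 : (0:ℝ) ≤ Q ^ 25 := pow_nonneg hQ0.le _
  rw [hsplit, hf0, hfm1]
  nlinarith [hQ4]

lemma key_cos_all {a : ℝ} (ha : 0 < a) {g : ℤ → ℝ} (hgb : ∀ n, |g n| ≤ 2)
    (hnonneg : ∀ n, 0 ≤ g n) (h1 : 0 < g 1) :
    0 < ∑' n : ℤ, exp (-a * (n : ℝ) ^ 2) * g n :=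
  Summable.tsum_pos (summable_gauss_cos ha g hgb) (fun n => mul_nonneg (exp_pos _).le (hnonneg n)) 1
    (mul_pos (exp_pos _) h1)

lemma cos_bounds : Real.cos (2 * π / 7) < 1 ∧ 1 / 2 < Real.cos (2 * π / 7) ∧
    Real.cos (4 * π / 7) < 0 ∧ -(1 / 2) < Real.cos (4 * π / 7) ∧
    Real.cos (6 * π / 7) < -(Real.sqrt 3 / 2) := by
  have hp : (0:ℝ) < π := pi_pos
  refine ⟨?_, ?_, ?_, ?_, ?_⟩
  · have := Real.cos_lt_cos_of_nonneg_of_le_pi (le_refl 0) (by linarith) (by linarith : (0:ℝ) < 2 * π / 7)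
    simpa using this
  · have := Real.cos_lt_cos_of_nonneg_of_le_pi (by positivity : (0:ℝ) ≤ 2 * π / 7)
      (by linarith : π / 3 ≤ π) (by linarith : 2 * π / 7 < π / 3)
    rwa [Real.cos_pi_div_three] at this
  · have := Real.cos_lt_cos_of_nonneg_of_le_pi (by positivity : (0:ℝ) ≤ π / 2)
      (by linarith : 4 * π / 7 ≤ π) (by linarith : π / 2 < 4 * π / 7)
    rwa [Real.cos_pi_div_two] at this
  · have := Real.cos_lt_cos_of_nonneg_of_le_pi (by positivity : (0:ℝ) ≤ 4 * π / 7)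
      (by linarith : 2 * π / 3 ≤ π) (by linarith : 4 * π / 7 < 2 * π / 3)
    rwa [show 2 * π / 3 = π - π / 3 by ring, Real.cos_pi_sub, Real.cos_pi_div_three] at this
  · have := Real.cos_lt_cos_of_nonneg_of_le_pi (by positivity : (0:ℝ) ≤ 5 * π / 6)
      (by linarith : 6 * π / 7 ≤ π) (by linarith : 5 * π / 6 < 6 * π / 7)
    rwa [show 5 * π / 6 = π - π / 6 by ring, Real.cos_pi_sub, Real.cos_pi_div_six] at this

noncomputable def Gf (T x : ℝ) : ℝ := ∑' n : ℤ, exp (-T * ((n : ℝ) + x) ^ 2)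

lemma Gf_neg (T x : ℝ) : Gf T (-x) = Gf T x := by
  have h := (Equiv.neg ℤ).tsum_eq (fun n : ℤ => exp (-T * ((n : ℝ) + x) ^ 2))
  rw [Gf, Gf, ← h]
  apply tsum_congr
  intro n
  simp only [Equiv.neg_apply]
  congr 1
  push_cast
  ring

lemma Gf_pos {T x : ℝ} (hT : 0 < T) (hx0 : 0 ≤ x) (hx1 : x ≤ 1) : 0 < Gf T x :=
  Summable.tsum_pos (summable_gauss_int hT hx0 hx1) (fun n => (exp_pos _).le) 0 (exp_pos _)

lemma cos_diff_bdd (x y : ℝ) : ∀ n : ℤ, |cos (2 * π * n * x) - cos (2 * π * n * y)| ≤ 2 := by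
  intro n
  have h1 := abs_cos_le_one (2 * π * n * x)
  have h2 := abs_cos_le_one (2 * π * n * y)
  rw [abs_le] at *
  constructor <;> [linarith [h1.1, h2.2]; linarith [h1.2, h2.1]]

lemma G_diff {T : ℝ} (hT : 0 < T) (x y : ℝ) :
    Gf T x - Gf T y = Real.sqrt (π / T)
      * ∑' n : ℤ, exp (-(π ^ 2 / T) * (n : ℝ) ^ 2) * (cos (2 * π * n * x) - cos (2 * π * n * y)) := by
  have ha : 0 < π ^ 2 / T := div_pos (pow_pos pi_pos 2) hT
  have h1 := summable_gauss_cos ha (fun n => cos (2 * π * n * x))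
    (fun n => (abs_cos_le_one _).trans (by norm_num))
  have h2 := summable_gauss_cos ha (fun n => cos (2 * π * n * y))
    (fun n => (abs_cos_le_one _).trans (by norm_num))
  rw [Gf, Gf, poisson hT x, poisson hT y, ← mul_sub, ← Summable.tsum_sub h1 h2]
  congr 1
  apply tsum_congr
  intro n
  ring

lemma cos_even_diff (x y : ℝ) : ∀ n : ℤ,
    cos (2 * π * (-n : ℤ) * x) - cos (2 * π * (-n : ℤ) * y)
      = cos (2 * π * n * x) - cos (2 * π * n * y) := by
  intro n
  push_cast
  rw [show 2 * π * -(n:ℝ) * x = -(2 * π * n * x) by ring, show 2 * π * -(n:ℝ) * y = -(2 * π * n * y) by ring,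
    Real.cos_neg, Real.cos_neg]

lemma step1 {T : ℝ} (hT : 0 < T) : Gf T (1 / 7) < Gf T 0 := by
  have hd : 0 < Gf T 0 - Gf T (1 / 7) := by
    rw [G_diff hT 0 (1 / 7)]
    apply mul_pos (Real.sqrt_pos.2 (div_pos pi_pos hT))
    apply key_cos_all (div_pos (pow_pos pi_pos 2) hT)
      (g := fun n => cos (2 * π * n * 0) - cos (2 * π * n * (1 / 7)))
    · exact cos_diff_bdd 0 (1 / 7)
    · intro n
      simp only [mul_zero, Real.cos_zero]
      linarith [Real.cos_le_one (2 * π * n * (1 / 7))]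
    · have e1 : 2 * π * ((1:ℤ):ℝ) * (1 / 7) = 2 * π / 7 := by push_cast; ring
      simp only [e1, mul_zero, Real.cos_zero]
      linarith [cos_bounds.1]
  linarith

lemma step2 {T : ℝ} (hT : 0 < T) : Gf T (2 / 7) < Gf T (1 / 7) := by
  have hd : 0 < Gf T (1 / 7) - Gf T (2 / 7) := by
    by_cases hc : T ≤ π ^ 2
    · rw [G_diff hT (1 / 7) (2 / 7)]
      apply mul_pos (Real.sqrt_pos.2 (div_pos pi_pos hT))
      apply key_cos_one ((one_le_div hT).2 hc)
        (g := fun n => cos (2 * π * n * (1 / 7)) - cos (2 * π * n * (2 / 7)))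
      · exact cos_even_diff (1 / 7) (2 / 7)
      · norm_num
      · exact cos_diff_bdd (1 / 7) (2 / 7)
      · have e1 : 2 * π * ((1:ℤ):ℝ) * (1 / 7) = 2 * π / 7 := by push_cast; ring
        have e2 : 2 * π * ((1:ℤ):ℝ) * (2 / 7) = 4 * π / 7 := by push_cast; ring
        simp only [e1, e2]
        have := cos_bounds.2.1
        have := cos_bounds.2.2.1
        norm_num
        linarith
    · push_neg at hc
      have hbb : π ^ 2 / 49 < T / 49 := by linarith
      have hb0 : 0 < T / 49 := by linarith [sq_nonneg π, pi_pos]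
      have hGx : Gf T (1 / 7) = ∑' m : ℤ, exp (-(T / 49) * (7 * (m : ℝ) + 1) ^ 2) := by
        apply tsum_congr; intro n; congr 1; ring
      have hGy : Gf T (2 / 7) = ∑' m : ℤ, exp (-(T / 49) * (7 * (m : ℝ) + 2) ^ 2) := by
        apply tsum_congr; intro n; congr 1; ring
      rw [hGx, hGy, ← Summable.tsum_sub (summable_seven hb0 (by norm_num) (by norm_num))
        (summable_seven hb0 (by norm_num) (by norm_num))]
      exact direct_A hbb
  linarith

lemma step3 {T : ℝ} (hT : 0 < T) : Gf T (3 / 7) < Gf T (2 / 7) := by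
  have hs3 : (1.72 : ℝ) ≤ Real.sqrt 3 := by
    rw [Real.le_sqrt (by norm_num) (by norm_num)]
    norm_num
  have hd : 0 < Gf T (2 / 7) - Gf T (3 / 7) := by
    by_cases hc : T ≤ π ^ 2
    · rw [G_diff hT (2 / 7) (3 / 7)]
      apply mul_pos (Real.sqrt_pos.2 (div_pos pi_pos hT))
      apply key_cos_one ((one_le_div hT).2 hc)
        (g := fun n => cos (2 * π * n * (2 / 7)) - cos (2 * π * n * (3 / 7)))
      · exact cos_even_diff (2 / 7) (3 / 7)
      · norm_num
      · exact cos_diff_bdd (2 / 7) (3 / 7)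
      · have e1 : 2 * π * ((1:ℤ):ℝ) * (2 / 7) = 4 * π / 7 := by push_cast; ring
        have e2 : 2 * π * ((1:ℤ):ℝ) * (3 / 7) = 6 * π / 7 := by push_cast; ring
        simp only [e1, e2]
        have := cos_bounds.2.2.2.1
        have := cos_bounds.2.2.2.2
        norm_num
        linarith
    · push_neg at hc
      have hbb : π ^ 2 / 49 < T / 49 := by linarith
      have hb0 : 0 < T / 49 := by linarith [sq_nonneg π, pi_pos]
      have hGx : Gf T (2 / 7) = ∑' m : ℤ, exp (-(T / 49) * (7 * (m : ℝ) + 2) ^ 2) := by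
        apply tsum_congr; intro n; congr 1; ring
      have hGy : Gf T (3 / 7) = ∑' m : ℤ, exp (-(T / 49) * (7 * (m : ℝ) + 3) ^ 2) := by
        apply tsum_congr; intro n; congr 1; ring
      rw [hGx, hGy, ← Summable.tsum_sub (summable_seven hb0 (by norm_num) (by norm_num))
        (summable_seven hb0 (by norm_num) (by norm_num))]
      exact direct_B hbb
  linarith


theorem uvw_order (q u v w : ℝ) (hq0 : 0 < q) (hq1 : q < 1)
    (hu : u = 2 * q ^ ((1 : ℝ) / 7) * ramF (q ^ 5) (q ^ 9) / phi (q ^ 7))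
    (hv : v = 2 * q ^ ((4 : ℝ) / 7) * ramF (q ^ 3) (q ^ 11) / phi (q ^ 7))
    (hw : w = 2 * q ^ ((9 : ℝ) / 7) * ramF q (q ^ 13) / phi (q ^ 7)) :
    2 > u ∧ u > v ∧ v > w ∧ w > 0 := by
  have hlog : Real.log q < 0 := Real.log_neg hq0 hq1
  set T : ℝ := -(7 * Real.log q) with hTdef
  have hT : 0 < T := by rw [hTdef]; linarith
  -- phi
  have hphi : phi (q ^ 7) = Gf T 0 := by
    rw [phi, Gf]
    apply tsum_congr; intro n
    have hq7 : (0:ℝ) < q ^ 7 := pow_pos hq0 7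
    rw [← Real.rpow_intCast (q ^ 7) (n ^ 2), Real.rpow_def_of_pos hq7, Real.log_pow]
    congr 1
    rw [hTdef]
    push_cast
    ring
  -- generic term computation
  have hterm : ∀ (c1 c2 : ℕ) (m : ℤ), (q ^ c1 : ℝ) ^ (m * (m + 1) / 2) * (q ^ c2 : ℝ) ^ (m * (m - 1) / 2)
      = exp (Real.log q * ((c1 : ℝ) * (((m:ℝ) ^ 2 + m) / 2) + (c2 : ℝ) * (((m:ℝ) ^ 2 - m) / 2))) := by
    intro c1 c2 m
    have he1 : (2:ℤ) * (m * (m + 1) / 2) = m * (m + 1) :=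
      Int.mul_ediv_cancel' (Int.even_mul_succ_self m).two_dvd
    have he2' : Even (m * (m - 1)) := by
      have := Int.even_mul_succ_self (m - 1)
      rwa [show (m - 1) * (m - 1 + 1) = m * (m - 1) by ring] at this
    have he2 : (2:ℤ) * (m * (m - 1) / 2) = m * (m - 1) := Int.mul_ediv_cancel' he2'.two_dvd
    have h1 : ((m * (m + 1) / 2 : ℤ) : ℝ) = ((m:ℝ) ^ 2 + m) / 2 := by
      have h3 : (2:ℝ) * ((m * (m + 1) / 2 : ℤ) : ℝ) = (m:ℝ) * ((m:ℝ) + 1) := by exact_mod_cast he1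
      ring_nf at h3 ⊢
      linarith
    have h2 : ((m * (m - 1) / 2 : ℤ) : ℝ) = ((m:ℝ) ^ 2 - m) / 2 := by
      have h3 : (2:ℝ) * ((m * (m - 1) / 2 : ℤ) : ℝ) = (m:ℝ) * ((m:ℝ) - 1) := by exact_mod_cast he2
      ring_nf at h3 ⊢
      linarith
    rw [← Real.rpow_intCast (q ^ c1) _, ← Real.rpow_intCast (q ^ c2) _,
      Real.rpow_def_of_pos (pow_pos hq0 c1), Real.rpow_def_of_pos (pow_pos hq0 c2),
      Real.log_pow, Real.log_pow, ← Real.exp_add, h1, h2]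
    congr 1
    ring
  -- numerators
  have hnum : ∀ (c1 c2 : ℕ) (k : ℕ), (c1 : ℝ) = 7 - 2 * k → (c2 : ℝ) = 7 + 2 * k →
      2 * q ^ (((k:ℝ) ^ 2) / 7) * ramF (q ^ c1) (q ^ c2) = 2 * Gf T ((k : ℝ) / 7) := by
    intro c1 c2 k hc1 hc2
    have h0 : 2 * q ^ (((k:ℝ) ^ 2) / 7) * ramF (q ^ c1) (q ^ c2) = 2 * Gf T (-((k : ℝ) / 7)) := by
      rw [ramF, Gf, ← tsum_mul_left, ← tsum_mul_left]
      apply tsum_congr; intro m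
      rw [hterm c1 c2 m, Real.rpow_def_of_pos hq0, mul_assoc, ← Real.exp_add]
      congr 2
      rw [hc1, hc2, hTdef]
      ring
    rw [h0, Gf_neg]
  have hnu : 2 * q ^ ((1 : ℝ) / 7) * ramF (q ^ 5) (q ^ 9) = 2 * Gf T (1 / 7) := by
    have := hnum 5 9 1 (by norm_num) (by norm_num)
    norm_num at this ⊢
    convert this using 4 <;> norm_num
  have hnv : 2 * q ^ ((4 : ℝ) / 7) * ramF (q ^ 3) (q ^ 11) = 2 * Gf T (2 / 7) := by
    have := hnum 3 11 2 (by norm_num) (by norm_num)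
    norm_num at this ⊢
    convert this using 4 <;> norm_num
  have hnw : 2 * q ^ ((9 : ℝ) / 7) * ramF q (q ^ 13) = 2 * Gf T (3 / 7) := by
    have := hnum 1 13 3 (by norm_num) (by norm_num)
    rw [pow_one] at this
    norm_num at this ⊢
    convert this using 4 <;> norm_num
  have hG0 : 0 < Gf T 0 := Gf_pos hT le_rfl zero_le_one
  have h1 := step1 hT
  have h2 := step2 hT
  have h3 := step3 hT
  have hG3 : 0 < Gf T (3 / 7) := Gf_pos hT (by norm_num) (by norm_num)
  rw [hu, hv, hw, hphi, hnu, hnv, hnw]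
  refine ⟨?_, ?_, ?_, ?_⟩
  · rw [gt_iff_lt, div_lt_iff₀ hG0]; linarith
  · rw [gt_iff_lt, div_lt_div_iff_of_pos_right hG0]; linarith
  · rw [gt_iff_lt, div_lt_div_iff_of_pos_right hG0]; linarith
  · exact div_pos (by linarith) hG0
end

section
/- For 0 < q < 1, the quantity p := u·v·w satisfies 0 < p < 8, where u := 2q^{1/7} f(q⁵, q⁹)/φ(q⁷), v := 2q^{4/7} f(q³, q¹¹)/φ(q⁷), and w := 2q^{9/7} f(q, q¹³)/φ(q⁷). -/
open Real

noncomputable def Egs (s : ℝ) (r : ℤ) : ℝ := ∑' m : ℤ, Real.exp (-s * (7*(m:ℝ)+(r:ℝ))^2)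

lemma summable_gauss {s : ℝ} (hs : 0 < s) : Summable fun n : ℤ => Real.exp (-s * (n:ℝ)^2) := by
  have hnat : Summable fun n : ℕ => Real.exp (-s * (n:ℝ)^2) := by
    refine Summable.of_nonneg_of_le (f := fun n : ℕ => Real.exp (-s) ^ n)
      (fun n => (Real.exp_pos _).le) (fun n => ?_)
      (summable_geometric_of_lt_one (Real.exp_pos _).le
        (Real.exp_lt_one_iff.2 (by linarith)))
    show Real.exp (-s * (n:ℝ)^2) ≤ Real.exp (-s) ^ n
    rw [← Real.exp_nat_mul]
    apply Real.exp_le_exp.2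
    have : (n:ℝ) ≤ (n:ℝ)^2 := by
      exact_mod_cast Nat.cast_le.2 (Nat.le_self_pow two_ne_zero n)
    nlinarith [mul_le_mul_of_nonneg_left this hs.le]
  apply Summable.of_nat_of_neg <;> simpa using hnat

lemma summable_E {s : ℝ} (hs : 0 < s) (r : ℤ) :
    Summable fun m : ℤ => Real.exp (-s * (7*(m:ℝ)+(r:ℝ))^2) := by
  have hinj : Function.Injective (fun m : ℤ => 7*m + r) := fun a b h => by
    simpa using h
  refine ((summable_gauss hs).comp_injective hinj).congr fun m => ?_
  simp only [Function.comp]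
  congr 1
  push_cast
  ring

lemma Egs_pos {s : ℝ} (hs : 0 < s) (r : ℤ) : 0 < Egs s r :=
  Summable.tsum_pos (summable_E hs r) (fun m => (Real.exp_pos _).le) 0 (Real.exp_pos _)

lemma Egs_neg (s : ℝ) (r : ℤ) : Egs s (-r) = Egs s r := by
  unfold Egs
  rw [← (Equiv.neg ℤ).tsum_eq (fun m : ℤ => Real.exp (-s * (7*(m:ℝ)+(r:ℝ))^2))]
  apply tsum_congr
  intro m
  simp only [Equiv.neg_apply]
  congr 1
  push_cast
  ring

lemma Egs_sub (s : ℝ) (r : ℤ) : Egs s (7 - r) = Egs s r := by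
  unfold Egs
  rw [← (Equiv.subLeft (-1 : ℤ)).tsum_eq (fun m : ℤ => Real.exp (-s * (7*(m:ℝ)+(r:ℝ))^2))]
  apply tsum_congr
  intro m
  simp only [Equiv.subLeft_apply]
  congr 1
  push_cast
  ring

lemma theta_decomp {s : ℝ} (hs : 0 < s) :
    ∑' n : ℤ, Real.exp (-s * (n:ℝ)^2)
      = Egs s 0 + 2*Egs s 1 + 2*Egs s 2 + 2*Egs s 3 := by
  have e := (Int.divModEquiv 7).symm
  have hsum : Summable fun p : ℤ × Fin 7 =>
      Real.exp (-s * ((((Int.divModEquiv 7).symm p : ℤ)):ℝ)^2) :=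
    (summable_gauss hs).comp_injective (Int.divModEquiv 7).symm.injective
  calc ∑' n : ℤ, Real.exp (-s * (n:ℝ)^2)
      = ∑' p : ℤ × Fin 7, Real.exp (-s * ((((Int.divModEquiv 7).symm p : ℤ)):ℝ)^2) :=
        ((Int.divModEquiv 7).symm.tsum_eq _).symm
    _ = ∑' m : ℤ, ∑' r : Fin 7, Real.exp (-s * (((m * 7 + (r:ℤ) : ℤ)):ℝ)^2) := by
        rw [Summable.tsum_prod hsum]
        exact tsum_congr fun m => tsum_congr fun r => by simp [Int.divModEquiv]
    _ = ∑' m : ℤ, ∑ r : Fin 7, Real.exp (-s * (((m * 7 + (r:ℤ) : ℤ)):ℝ)^2) := by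
        exact tsum_congr fun m => tsum_fintype _
    _ = ∑ r : Fin 7, ∑' m : ℤ, Real.exp (-s * (((m * 7 + (r:ℤ) : ℤ)):ℝ)^2) := by
        refine Summable.tsum_finsetSum fun r _ => ?_
        have hinj : Function.Injective (fun m : ℤ => m * 7 + (r:ℤ)) := fun a b h => by
          simpa using h
        exact (summable_gauss hs).comp_injective hinj
    _ = ∑ r : Fin 7, Egs s (r:ℤ) := by
        refine Finset.sum_congr rfl fun r _ => tsum_congr fun m => ?_
        congr 1
        push_cast
        ring
    _ = Egs s 0 + 2*Egs s 1 + 2*Egs s 2 + 2*Egs s 3 := by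
        rw [Fin.sum_univ_seven]
        have h6 : ((6 : Fin 7) : ℤ) = 6 := by decide
        have h5 : ((5 : Fin 7) : ℤ) = 5 := by decide
        have h4 : ((4 : Fin 7) : ℤ) = 4 := by decide
        have h3 : ((3 : Fin 7) : ℤ) = 3 := by decide
        have h2 : ((2 : Fin 7) : ℤ) = 2 := by decide
        have h1 : ((1 : Fin 7) : ℤ) = 1 := by decide
        have h0 : ((0 : Fin 7) : ℤ) = 0 := by decide
        rw [h0, h1, h2, h3, h4, h5, h6]
        have e1 : Egs s 6 = Egs s 1 := by simpa using Egs_sub s 1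
        have e2 : Egs s 5 = Egs s 2 := by simpa using Egs_sub s 2
        have e3 : Egs s 4 = Egs s 3 := by simpa using Egs_sub s 3
        rw [e1, e2, e3]
        ring

lemma theta_lt {s : ℝ} (hs : 0 < s) :
    ∑' n : ℤ, Real.exp (-s * (n:ℝ)^2) < 7 * ∑' n : ℤ, Real.exp (-(49*s) * (n:ℝ)^2) := by
  have hπ := Real.pi_pos
  have ha : 0 < s / π := div_pos hs hπ
  have h49a : 0 < 49 * (s / π) := by positivity
  have hL : ∑' n : ℤ, Real.exp (-s * (n:ℝ)^2)
      = (1:ℝ) / (s/π) ^ ((1:ℝ)/2) * ∑' n : ℤ, Real.exp (-π / (s/π) * (n:ℝ)^2) := by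
    rw [← Real.tsum_exp_neg_mul_int_sq ha]
    refine tsum_congr fun n => ?_
    congr 2
    field_simp
  have hR : ∑' n : ℤ, Real.exp (-(49*s) * (n:ℝ)^2)
      = (1:ℝ) / (49*(s/π)) ^ ((1:ℝ)/2) * ∑' n : ℤ, Real.exp (-π / (49*(s/π)) * (n:ℝ)^2) := by
    rw [← Real.tsum_exp_neg_mul_int_sq h49a]
    refine tsum_congr fun n => ?_
    congr 1
    field_simp
  have h7 : ((49:ℝ)*(s/π)) ^ ((1:ℝ)/2) = 7 * (s/π) ^ ((1:ℝ)/2) := by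
    rw [Real.mul_rpow (by norm_num) ha.le]
    congr 1
    rw [show (49:ℝ) = 7^(2:ℕ) by norm_num, ← Real.rpow_natCast 7 2,
      ← Real.rpow_mul (by norm_num)]
    norm_num
  have hsum1 : Summable fun n : ℤ => Real.exp (-π / (s/π) * (n:ℝ)^2) := by
    refine (summable_gauss (s := π / (s/π)) (by positivity)).congr fun n => ?_
    rw [neg_div]
  have hsum2 : Summable fun n : ℤ => Real.exp (-π / (49*(s/π)) * (n:ℝ)^2) := by
    refine (summable_gauss (s := π / (49*(s/π))) (by positivity)).congr fun n => ?_
    rw [neg_div]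
  have hcmp : ∑' n : ℤ, Real.exp (-π / (s/π) * (n:ℝ)^2)
      < ∑' n : ℤ, Real.exp (-π / (49*(s/π)) * (n:ℝ)^2) := by
    refine Summable.tsum_lt_tsum (i := (1:ℤ)) (fun n => ?_) ?_ hsum1 hsum2
    · apply Real.exp_le_exp.2
      apply mul_le_mul_of_nonneg_right _ (sq_nonneg _)
      rw [neg_div, neg_div, neg_le_neg_iff]
      apply div_le_div_of_nonneg_left hπ.le ha _
      · linarith
    · apply Real.exp_lt_exp.2
      have : π / (49*(s/π)) < π / (s/π) := by
        apply div_lt_div_of_pos_left hπ ha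
        linarith
      rw [neg_div, neg_div]
      push_cast
      nlinarith
  calc ∑' n : ℤ, Real.exp (-s * (n:ℝ)^2)
      = (1:ℝ) / (s/π) ^ ((1:ℝ)/2) * ∑' n : ℤ, Real.exp (-π / (s/π) * (n:ℝ)^2) := hL
    _ < (1:ℝ) / (s/π) ^ ((1:ℝ)/2) * ∑' n : ℤ, Real.exp (-π / (49*(s/π)) * (n:ℝ)^2) := by
        apply mul_lt_mul_of_pos_left hcmp
        positivity
    _ = 7 * ∑' n : ℤ, Real.exp (-(49*s) * (n:ℝ)^2) := by
        rw [hR, h7]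
        field_simp

lemma Egs_zero (s : ℝ) : Egs s 0 = ∑' n : ℤ, Real.exp (-(49*s) * (n:ℝ)^2) := by
  refine tsum_congr fun m => ?_
  congr 1
  push_cast
  ring

lemma key_ineq {s : ℝ} (hs : 0 < s) : Egs s 1 + Egs s 2 + Egs s 3 < 3 * Egs s 0 := by
  have h := theta_lt hs
  rw [theta_decomp hs, ← Egs_zero s] at h
  linarith

lemma zpow_eq_exp {x : ℝ} (hx : 0 < x) (k : ℤ) : x ^ k = Real.exp (Real.log x * k) := by
  rw [← Real.rpow_intCast x k, Real.rpow_def_of_pos hx]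

lemma tdiv (m : ℤ) : 2 * (m*(m+1)/2) = m*(m+1) :=
  Int.mul_ediv_cancel' (Int.even_mul_succ_self m).two_dvd

lemma tdiv' (m : ℤ) : 2 * (m*(m-1)/2) = m*(m-1) := by
  have h : m*(m-1) = (m-1)*((m-1)+1) := by ring
  rw [h]
  exact tdiv (m-1)

lemma ramF_to_E {q : ℝ} (hq0 : 0 < q) (a b : ℕ) (r : ℤ) (e : ℝ)
    (he : e = (r:ℝ)^2/7)
    (h : ∀ m : ℤ, (a:ℤ) * (m*(m+1)/2) + (b:ℤ) * (m*(m-1)/2) = 7*m^2 - 2*r*m) :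
    q ^ e * ramF (q^a) (q^b) = Egs (-Real.log q / 7) r := by
  rw [← Egs_neg (-Real.log q / 7) r]
  unfold ramF Egs
  rw [← tsum_mul_left]
  refine tsum_congr fun m => ?_
  have hc : (a:ℝ) * ((m*(m+1)/2 : ℤ):ℝ) + (b:ℝ) * ((m*(m-1)/2 : ℤ):ℝ)
      = 7*(m:ℝ)^2 - 2*(r:ℝ)*(m:ℝ) := by exact_mod_cast h m
  rw [zpow_eq_exp (pow_pos hq0 a), zpow_eq_exp (pow_pos hq0 b),
    Real.rpow_def_of_pos hq0, Real.log_pow, Real.log_pow, ← Real.exp_add, ← Real.exp_add]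
  congr 1
  push_cast
  push_cast at hc
  rw [he]
  linear_combination Real.log q * hc

lemma phi_to_E {q : ℝ} (hq0 : 0 < q) : phi (q^7) = Egs (-Real.log q / 7) 0 := by
  unfold phi Egs
  refine tsum_congr fun n => ?_
  rw [zpow_eq_exp (pow_pos hq0 7), Real.log_pow]
  congr 1
  push_cast
  ring

theorem p_bounds (q u v w p : ℝ) (hq0 : 0 < q) (hq1 : q < 1)
    (hu : u = 2 * q ^ ((1 : ℝ) / 7) * ramF (q ^ 5) (q ^ 9) / phi (q ^ 7))
    (hv : v = 2 * q ^ ((4 : ℝ) / 7) * ramF (q ^ 3) (q ^ 11) / phi (q ^ 7))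
    (hw : w = 2 * q ^ ((9 : ℝ) / 7) * ramF q (q ^ 13) / phi (q ^ 7))
    (hp : p = u * v * w) :
    0 < p ∧ p < 8 := by
  have hlog : Real.log q < 0 := Real.log_neg hq0 hq1
  set s : ℝ := -Real.log q / 7 with hs_def
  have hs : 0 < s := by
    rw [hs_def]; linarith
  set A := Egs s 1 with hA_def
  set B := Egs s 2 with hB_def
  set C := Egs s 3 with hC_def
  set D := Egs s 0 with hD_def
  have hA : 0 < A := Egs_pos hs 1
  have hB : 0 < B := Egs_pos hs 2
  have hC : 0 < C := Egs_pos hs 3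
  have hD : 0 < D := Egs_pos hs 0
  have hkey : A + B + C < 3 * D := key_ineq hs
  have hphi : phi (q^7) = D := phi_to_E hq0
  have h1 : q ^ ((1:ℝ)/7) * ramF (q^5) (q^9) = A := by
    rw [hA_def]
    refine ramF_to_E hq0 5 9 1 _ (by norm_num) fun m => ?_
    have a1 := tdiv m
    have a2 := tdiv' m
    have h2 : 2*((5:ℤ) * (m*(m+1)/2) + 9 * (m*(m-1)/2)) = 2*(7*m^2 - 2*1*m) := by
      linear_combination 5*a1 + 9*a2
    exact mul_left_cancel₀ two_ne_zero h2
  have h2 : q ^ ((4:ℝ)/7) * ramF (q^3) (q^11) = B := by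
    rw [hB_def]
    refine ramF_to_E hq0 3 11 2 _ (by norm_num) fun m => ?_
    have a1 := tdiv m
    have a2 := tdiv' m
    have h2 : 2*((3:ℤ) * (m*(m+1)/2) + 11 * (m*(m-1)/2)) = 2*(7*m^2 - 2*2*m) := by
      linear_combination 3*a1 + 11*a2
    exact mul_left_cancel₀ two_ne_zero h2
  have h3 : q ^ ((9:ℝ)/7) * ramF q (q^13) = C := by
    rw [hC_def, show ramF q (q^13) = ramF (q^1) (q^13) by rw [pow_one]]
    refine ramF_to_E hq0 1 13 3 _ (by norm_num) fun m => ?_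
    have a1 := tdiv m
    have a2 := tdiv' m
    have h2 : 2*((1:ℤ) * (m*(m+1)/2) + 13 * (m*(m-1)/2)) = 2*(7*m^2 - 2*3*m) := by
      linear_combination a1 + 13*a2
    exact mul_left_cancel₀ two_ne_zero h2
  clear_value A B C D
  have hu' : u = 2 * A / D := by rw [hu, hphi, ← h1]; ring
  have hv' : v = 2 * B / D := by rw [hv, hphi, ← h2]; ring
  have hw' : w = 2 * C / D := by rw [hw, hphi, ← h3]; ring
  have hp' : p = 8 * (A*B*C) / D^3 := by
    rw [hp, hu', hv', hw']
    field_simp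
    ring
  constructor
  · rw [hp']
    have h8 : 0 < 8 * (A*B*C) := by positivity
    exact div_pos h8 (by positivity)
  · rw [hp', div_lt_iff₀ (by positivity : (0:ℝ) < D^3)]
    have hAMGM : A*B*C ≤ ((A+B+C)/3)^3 := by
      nlinarith [sq_nonneg (A-B), sq_nonneg (B-C), sq_nonneg (A-C),
        mul_nonneg hA.le (sq_nonneg (B-C)), mul_nonneg hB.le (sq_nonneg (A-C)),
        mul_nonneg hC.le (sq_nonneg (A-B)),
        mul_nonneg (add_nonneg (add_nonneg hA.le hB.le) hC.le) (sq_nonneg (A-B)),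
        mul_nonneg (add_nonneg (add_nonneg hA.le hB.le) hC.le) (sq_nonneg (B-C)),
        mul_nonneg (add_nonneg (add_nonneg hA.le hB.le) hC.le) (sq_nonneg (A-C))]
    have hlt : ((A+B+C)/3)^3 < D^3 := by
      apply pow_lt_pow_left₀ _ (by positivity) (by norm_num)
      linarith
    nlinarith
end

section
/- One has (cos(π/7)/(2cos²(2π/7)))² + (cos(2π/7)/(2cos²(3π/7)))² + (cos(3π/7)/(2cos²(π/7)))² = 41. -/
open Real


theorem trig_identity_41 :
    (Real.cos (π / 7) / (2 * Real.cos (2 * π / 7) ^ 2)) ^ 2 +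
      (Real.cos (2 * π / 7) / (2 * Real.cos (3 * π / 7) ^ 2)) ^ 2 +
      (Real.cos (3 * π / 7) / (2 * Real.cos (π / 7) ^ 2)) ^ 2 = 41 := by
  have hpi := Real.pi_pos
  have hxpos : 0 < Real.cos (π / 7) :=
    Real.cos_pos_of_mem_Ioo ⟨by linarith, by linarith⟩
  have hbpos : 0 < Real.cos (2 * π / 7) :=
    Real.cos_pos_of_mem_Ioo ⟨by linarith, by linarith⟩
  have hcpos : 0 < Real.cos (3 * π / 7) :=
    Real.cos_pos_of_mem_Ioo ⟨by linarith, by linarith⟩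
  set x := Real.cos (π / 7) with hxdef
  have hb : Real.cos (2 * π / 7) = 2 * x ^ 2 - 1 := by
    rw [show (2 * π / 7) = 2 * (π / 7) by ring, Real.cos_two_mul]
  have hc : Real.cos (3 * π / 7) = 4 * x ^ 3 - 3 * x := by
    rw [show (3 * π / 7) = 3 * (π / 7) by ring, Real.cos_three_mul]
  have h4 : Real.cos (4 * (π / 7)) = -(Real.cos (3 * (π / 7))) := by
    rw [show (4 * (π / 7)) = π - 3 * (π / 7) by ring, Real.cos_pi_sub]
  have h4' : 2 * (2 * x ^ 2 - 1) ^ 2 - 1 = -(4 * x ^ 3 - 3 * x) := by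
    rw [← Real.cos_three_mul, ← h4, show (4 * (π / 7)) = 2 * (2 * (π / 7)) by ring,
      Real.cos_two_mul, Real.cos_two_mul]
  have hq : 8 * x ^ 3 - 4 * x ^ 2 - 4 * x + 1 = 0 := by
    have hfac : (x + 1) * (8 * x ^ 3 - 4 * x ^ 2 - 4 * x + 1) = 0 := by nlinarith [h4']
    rcases mul_eq_zero.1 hfac with h | h
    · nlinarith
    · exact h
  rw [hb, hc]
  have hb0 : (2 * x ^ 2 - 1) ≠ 0 := by rw [← hb]; positivity
  have hc0 : (4 * x ^ 3 - 3 * x) ≠ 0 := by rw [← hc]; positivity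
  have hx0 : x ≠ 0 := ne_of_gt hxpos
  have h3 : (x ^ 2 * 4 - 3) ≠ 0 := fun h => hc0 (by linear_combination x * h)
  have h1 : (x ^ 2 * 2 - 1) ≠ 0 := fun h => hb0 (by linear_combination h)
  field_simp
  linear_combination (1 + 4 * x + 737 * x ^ 2 + 2956 * x ^ 3 - 10148 * x ^ 4 - 34664 * x ^ 5 + 57737 * x ^ 6 + 173476 * x ^ 7 - 178700 * x ^ 8 - 482792 * x ^ 9 + 327744 * x ^ 10 + 809408 * x ^ 11 - 359488 * x ^ 12 - 822272 * x ^ 13 + 222464 * x ^ 14 + 476672 * x ^ 15 - 64512 * x ^ 16 - 131072 * x ^ 17 + 4096 * x ^ 18 + 8192 * x ^ 19) * hq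
end

section
/- Let a := 28^{1/4}, and define p_a := ((a + 1)² + 1)/2, m_a² := (1/2)(a³ + 4a² + 10a + 14), and r_a(ξ) := ξ³ + 2ξ²(1 + 3p_a − m_a²) + ξ·p_a²(p_a + 4) − p_a⁴. Then r_a factors as r_a(ξ) = (ξ − α)(ξ − β)(ξ − γ), where α = (2/a²)·{a³ + a² + 4a + 2 + (2a − a³ + 12)·cos(π/7) + (a³ − 2a − 4)·cos(2π/7)}, β = (2/a²)·{a³/2 + a² + 5a + 8 − 8·cos(π/7) + (2a − a³ + 12)·cos(2π/7)}, and γ = (2/a²)·{a³/2 + a² + 5a + 4 + (a³ − 2a − 4)·cos(π/7) − 8·cos(2π/7)}. -/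
set_option maxHeartbeats 2000000

open Real

theorem cubic_factorization (a pa ma2 α β γ : ℝ)
    (ha : a = (28 : ℝ) ^ ((1 : ℝ) / 4))
    (hpa : pa = ((a + 1) ^ 2 + 1) / 2)
    (hma2 : ma2 = 1 / 2 * (a ^ 3 + 4 * a ^ 2 + 10 * a + 14))
    (hα : α = 2 / a ^ 2 *
      (a ^ 3 + a ^ 2 + 4 * a + 2 + (2 * a - a ^ 3 + 12) * Real.cos (π / 7) +
        (a ^ 3 - 2 * a - 4) * Real.cos (2 * π / 7)))
    (hβ : β = 2 / a ^ 2 *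
      (a ^ 3 / 2 + a ^ 2 + 5 * a + 8 - 8 * Real.cos (π / 7) +
        (2 * a - a ^ 3 + 12) * Real.cos (2 * π / 7)))
    (hγ : γ = 2 / a ^ 2 *
      (a ^ 3 / 2 + a ^ 2 + 5 * a + 4 + (a ^ 3 - 2 * a - 4) * Real.cos (π / 7) -
        8 * Real.cos (2 * π / 7))) :
    ∀ ξ : ℝ, ξ ^ 3 + 2 * ξ ^ 2 * (1 + 3 * pa - ma2) + ξ * pa ^ 2 * (pa + 4) - pa ^ 4 =
      (ξ - α) * (ξ - β) * (ξ - γ) := by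
  have hapos : (0:ℝ) < a := by
    rw [ha]; positivity
  have ha0 : a ≠ 0 := ne_of_gt hapos
  have ha4 : a ^ 4 = 28 := by
    rw [ha, ← Real.rpow_natCast ((28:ℝ) ^ ((1:ℝ)/4)) 4, ← Real.rpow_mul (by norm_num)]
    norm_num
  set c := Real.cos (π / 7) with hc1
  have hc2 : Real.cos (2 * π / 7) = 2 * c ^ 2 - 1 := by
    rw [show (2 * π / 7 : ℝ) = 2 * (π / 7) by ring, Real.cos_two_mul]
  have hc3 : Real.cos (3 * (π / 7)) = 4 * c ^ 3 - 3 * c := Real.cos_three_mul _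
  have hc4 : Real.cos (2 * (2 * π / 7)) = 2 * (Real.cos (2 * π / 7)) ^ 2 - 1 :=
    Real.cos_two_mul _
  have hsub : Real.cos (2 * (2 * π / 7)) = - Real.cos (3 * (π / 7)) := by
    rw [show (2 * (2 * π / 7) : ℝ) = π - 3 * (π / 7) by ring, Real.cos_pi_sub]
  have hcpos : 0 < c := by
    rw [hc1]
    apply Real.cos_pos_of_mem_Ioo
    constructor <;> nlinarith [Real.pi_pos]
  have hquart : (c + 1) * (8 * c ^ 3 - 4 * c ^ 2 - 4 * c + 1) = 0 := by
    rw [hc3] at hsub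
    rw [hc2] at hc4
    nlinarith [hsub, hc4]
  have hcube : 8 * c ^ 3 = 4 * c ^ 2 + 4 * c - 1 := by
    have : c + 1 ≠ 0 := by positivity
    have h := (mul_eq_zero.mp hquart).resolve_left this
    linarith
  intro ξ
  rw [hα, hβ, hγ, hpa, hma2, hc2]
  field_simp
  linear_combination ((1792)*a^0*c^0*ξ^0 + (896)*a^1*c^0*ξ^0 + (-896)*a^2*c^0*ξ^0 + (-1376)*a^3*c^0*ξ^0 + (256)*a^3*c^0*ξ^1 + (-928)*a^4*c^0*ξ^0 + (208)*a^4*c^0*ξ^1 + (-16)*a^4*c^0*ξ^2 + (-400)*a^5*c^0*ξ^0 + (128)*a^5*c^0*ξ^1 + (-16)*a^5*c^0*ξ^2 + (-164)*a^6*c^0*ξ^0 + (52)*a^6*c^0*ξ^1 + (-80)*a^7*c^0*ξ^0 + (12)*a^7*c^0*ξ^1 + (-32)*a^8*c^0*ξ^0 + (2)*a^8*c^0*ξ^1 + (-8)*a^9*c^0*ξ^0 + (-1)*a^10*c^0*ξ^0) * ha4 + ((13312)*a^0*c^0*ξ^0 + (-81920)*a^0*c^1*ξ^0 + (-53248)*a^0*c^2*ξ^0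 + (49152)*a^0*c^3*ξ^0 + (512)*a^1*c^0*ξ^0 + (-80896)*a^1*c^1*ξ^0 + (-2048)*a^1*c^2*ξ^0 + (32768)*a^1*c^3*ξ^0 + (-1280)*a^2*c^0*ξ^0 + (-23552)*a^2*c^1*ξ^0 + (3584)*a^2*c^1*ξ^1 + (5120)*a^2*c^2*ξ^0 + (4096)*a^2*c^3*ξ^0 + (-384)*a^3*c^0*ξ^0 + (15616)*a^3*c^1*ξ^0 + (1024)*a^3*c^1*ξ^1 + (1536)*a^3*c^2*ξ^0 + (-16384)*a^3*c^3*ξ^0 + (1280)*a^4*c^0*ξ^0 + (9984)*a^4*c^1*ξ^0 + (128)*a^4*c^1*ξ^1 + (-5120)*a^4*c^2*ξ^0 + (-4096)*a^4*c^3*ξ^0 + (192)*a^5*c^0*ξ^0 + (2176)*a^5*c^1*ξ^0 + (-512)*a^5*c^1*ξ^1 + (-768)*a^5*c^2*ξ^0 + (-320)*a^6*c^0*ξ^0 + (-768)*a^6*c^1*ξ^0 + (-128)*a^6*c^1*ξ^1 + (1280)*a^6*c^2*ξ^0 + (1024)*a^6*c^3*ξ^0 + (-96)*a^7*c^0*ξ^0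 + (-192)*a^7*c^1*ξ^0 + (384)*a^7*c^2*ξ^0 + (-64)*a^8*c^1*ξ^0 + (32)*a^8*c^1*ξ^1 + (16)*a^9*c^0*ξ^0 + (-32)*a^9*c^1*ξ^0 + (-64)*a^9*c^2*ξ^0) * hcube
end
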